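/- arXiv:1808.06449 — 4 statements merged into one kernel-verified Lean document; each statement's English description precedes it below -/
import Mathlib

section
/- Let ε ∈ [0,1), let c be a positive integer, let ℋ be a finite set, and let (C,H) be jointly distributed over [c+1]×ℋ with supp(C) = [c]. Write H_i := (H | C = i). For each i ∈ [c] let 𝒜_i ⊆ ℋ be a subset with Pr_{H_i}[𝒜_i] ≥ 1−ε. Define the random variable C' jointly with (C,H) as follows: given a sample h of H, C' is the smallest index i ∈ [c] such that h ∈ 𝒜_i, and C' = c+1 if no such index exists. Then ½‖p_{HC} − p_{HC'}‖₁ ≤ Σ_{i∈[c]} p_C(i) · Σ_{j∈[c], j≠i} Pr_{H_i}[𝒜_j] + ε. -/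
open Finset Real
open scoped Classical

noncomputable section

variable {ℋ : Type*} [Fintype ℋ]

/-- Marginal of `C` for a joint distribution on `[c+1] × ℋ`. -/
def margC {c : ℕ} (p : Fin (c + 1) → ℋ → ℝ) (i : Fin (c + 1)) : ℝ := ∑ h, p i h

/-- Marginal of `H`. -/
def margH {c : ℕ} (p : Fin (c + 1) → ℋ → ℝ) (h : ℋ) : ℝ := ∑ i, p i h

/-- `Pr_{H_i}[𝒜] = Σ_{h ∈ 𝒜} p_{H|C=i}(h)`. -/
def prHi {c : ℕ} (p : Fin (c + 1) → ℋ → ℝ) (i : Fin (c + 1)) (𝒜 : Finset ℋ) : ℝ :=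
  (∑ h ∈ 𝒜, p i h) / margC p i

/-- Lemma 2.9, position-based decoding: let `(C,H)` be jointly
distributed over `[c+1] × ℋ` (indices `i : Fin (c+1)` with `(i : ℕ) < c` representing
`[c]`, and the last index representing `c+1`), with `supp(C) = [c]`.  For each `i ∈ [c]`
let `𝒜 i ⊆ ℋ` satisfy `Pr_{H_i}[𝒜 i] ≥ 1 − ε`.  Let `C' : ℋ → Fin (c+1)` pick the
smallest `i ∈ [c]` with `h ∈ 𝒜 i`, and the last index if no such `i` exists.  Then
`½‖p_{HC} − p_{HC'}‖₁ ≤ Σ_{i∈[c]} p_C(i) Σ_{j∈[c], j≠i} Pr_{H_i}[𝒜 j] + ε`. -/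
theorem position_based_decoding_error
    {c : ℕ} (hc : 0 < c) (p : Fin (c + 1) → ℋ → ℝ)
    (hp0 : ∀ i h, 0 ≤ p i h) (hp1 : (∑ i, ∑ h, p i h) = 1)
    (hsupp : ∀ i : Fin (c + 1), 0 < margC p i ↔ (i : ℕ) < c)
    (ε : ℝ) (hε0 : 0 ≤ ε) (hε1 : ε < 1)
    (𝒜 : Fin (c + 1) → Finset ℋ)
    (h𝒜 : ∀ i : Fin (c + 1), (i : ℕ) < c → 1 - ε ≤ prHi p i (𝒜 i))
    (C' : ℋ → Fin (c + 1))
    (hC' : ∀ h : ℋ,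
      (((C' h : ℕ) < c ∧ h ∈ 𝒜 (C' h) ∧ ∀ j : Fin (c + 1), j < C' h → h ∉ 𝒜 j) ∨
       ((C' h : ℕ) = c ∧ ∀ j : Fin (c + 1), (j : ℕ) < c → h ∉ 𝒜 j))) :
    (1 / 2) * (∑ i, ∑ h, |margH p h * (if C' h = i then 1 else 0) - p i h|) ≤
      (∑ i : Fin (c + 1), if i.val < c then
          margC p i * (∑ j : Fin (c + 1), if j.val < c ∧ j ≠ i then prHi p i (𝒜 j) else 0)
        else 0) + ε := by
  classical
  -- the last index has zero marginal
  have hlast0 : margC p (Fin.last c) = 0 := by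
    have h1 : ¬ (0 < margC p (Fin.last c)) := by
      rw [hsupp]; simp
    have h2 : 0 ≤ margC p (Fin.last c) :=
      Finset.sum_nonneg fun h _ => hp0 _ h
    linarith
  have hnotlt : ∀ i : Fin (c + 1), ¬ (i : ℕ) < c → i = Fin.last c := by
    intro i hi
    have := i.isLt
    apply Fin.ext
    simp only [Fin.val_last]
    omega
  have plast : ∀ h, p (Fin.last c) h = 0 := by
    intro h
    have := (Finset.sum_eq_zero_iff_of_nonneg (fun h _ => hp0 (Fin.last c) h)).mp hlast0
    exact this h (Finset.mem_univ h)
  -- per-h computation of the ℓ1 sum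
  have key : ∀ h : ℋ, ∑ i, |margH p h * (if C' h = i then 1 else 0) - p i h|
      = 2 * ∑ i, (if i = C' h then 0 else p i h) := by
    intro h
    have hle : p (C' h) h ≤ margH p h :=
      Finset.single_le_sum (f := fun i => p i h) (fun i _ => hp0 i h) (Finset.mem_univ _)
    have e1 : ∑ i, |margH p h * (if C' h = i then 1 else 0) - p i h|
        = (∑ i ∈ univ.erase (C' h), p i h) + (margH p h - p (C' h) h) := by
      rw [← Finset.sum_erase_add _ _ (Finset.mem_univ (C' h))]
      congr 1
      · apply Finset.sum_congr rfl
        intro i hi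
        rw [Finset.mem_erase] at hi
        rw [if_neg (Ne.symm hi.1)]
        rw [abs_of_nonpos (by have := hp0 i h; linarith)]
        ring
      · rw [if_pos rfl, abs_of_nonneg (by linarith)]
        ring
    have e2 : ∑ i ∈ univ.erase (C' h), p i h = margH p h - p (C' h) h := by
      have := Finset.sum_erase_add univ (fun i => p i h) (Finset.mem_univ (C' h))
      unfold margH
      linarith
    have e3 : ∑ i, (if i = C' h then 0 else p i h) = margH p h - p (C' h) h := by
      rw [← e2]
      rw [← Finset.sum_erase_add univ _ (Finset.mem_univ (C' h))]
      rw [if_pos rfl, add_zero]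
      apply Finset.sum_congr rfl
      intro i hi
      rw [Finset.mem_erase] at hi
      rw [if_neg hi.1]
    rw [e1, e2, e3]; ring
  -- rewrite LHS
  have lhs_eq : (1 / 2) * (∑ i, ∑ h, |margH p h * (if C' h = i then 1 else 0) - p i h|)
      = ∑ i, ∑ h, (if i = C' h then 0 else p i h) := by
    rw [Finset.sum_comm]
    rw [Finset.sum_congr rfl fun h _ => key h]
    rw [← Finset.mul_sum]
    rw [Finset.sum_comm (f := fun h i => if i = C' h then 0 else p i h)]
    ring
  rw [lhs_eq]
  -- per-i bound
  have bound_i : ∀ i : Fin (c + 1), ∑ h, (if i = C' h then 0 else p i h) ≤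
      (if i.val < c then
          margC p i * (∑ j : Fin (c + 1), if j.val < c ∧ j ≠ i then prHi p i (𝒜 j) else 0)
        else 0) + (if i.val < c then margC p i * ε else 0) := by
    intro i
    by_cases hi : (i : ℕ) < c
    · rw [if_pos hi, if_pos hi]
      have hmpos : 0 < margC p i := (hsupp i).mpr hi
      -- termwise bound
      have tw : ∀ h : ℋ, (if i = C' h then 0 else p i h) ≤
          (∑ j : Fin (c + 1), if j.val < c ∧ j ≠ i then (if h ∈ 𝒜 j then p i h else 0) else 0)
          + (if h ∈ 𝒜 i then 0 else p i h) := by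
        intro h
        have hnn : ∀ j : Fin (c+1), (0:ℝ) ≤
            (if j.val < c ∧ j ≠ i then (if h ∈ 𝒜 j then p i h else 0) else 0) := by
          intro j
          split_ifs <;> simp [hp0]
        by_cases hci : i = C' h
        · rw [if_pos hci]
          apply add_nonneg (Finset.sum_nonneg fun j _ => hnn j)
          split_ifs <;> simp [hp0]
        · rw [if_neg hci]
          by_cases hA : h ∈ 𝒜 i
          · rw [if_pos hA]
            rcases hC' h with ⟨hlt, hmem, _⟩ | ⟨_, hnone⟩
            · have hjne : C' h ≠ i := fun e => hci e.symm
              have hterm : (if (C' h).val < c ∧ C' h ≠ i then (if h ∈ 𝒜 (C' h) then p i h else 0) else 0) = p i h := by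
                rw [if_pos ⟨hlt, hjne⟩, if_pos hmem]
              calc p i h = _ := hterm.symm
                _ ≤ ∑ j : Fin (c + 1), if j.val < c ∧ j ≠ i then (if h ∈ 𝒜 j then p i h else 0) else 0 :=
                    Finset.single_le_sum (fun j _ => hnn j) (Finset.mem_univ (C' h))
                _ = _ + 0 := by ring
            · exact absurd hA (hnone i hi)
          · rw [if_neg hA]
            have : (0:ℝ) ≤ ∑ j : Fin (c + 1), if j.val < c ∧ j ≠ i then (if h ∈ 𝒜 j then p i h else 0) else 0 :=
              Finset.sum_nonneg fun j _ => hnn j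
            linarith
      calc ∑ h, (if i = C' h then 0 else p i h)
          ≤ ∑ h, ((∑ j : Fin (c + 1), if j.val < c ∧ j ≠ i then (if h ∈ 𝒜 j then p i h else 0) else 0)
              + (if h ∈ 𝒜 i then 0 else p i h)) := Finset.sum_le_sum fun h _ => tw h
        _ = (∑ h, ∑ j : Fin (c + 1), if j.val < c ∧ j ≠ i then (if h ∈ 𝒜 j then p i h else 0) else 0)
              + ∑ h, (if h ∈ 𝒜 i then 0 else p i h) := Finset.sum_add_distrib
        _ ≤ margC p i * (∑ j : Fin (c + 1), if j.val < c ∧ j ≠ i then prHi p i (𝒜 j) else 0)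
              + margC p i * ε := by
            gcongr
            · -- first sum
              rw [Finset.sum_comm]
              rw [Finset.mul_sum]
              apply le_of_eq
              apply Finset.sum_congr rfl
              intro j _
              by_cases hj : j.val < c ∧ j ≠ i
              · simp only [if_pos hj]
                have : ∑ h, (if h ∈ 𝒜 j then p i h else 0) = ∑ h ∈ 𝒜 j, p i h := by
                  rw [Finset.sum_ite_mem, Finset.univ_inter]
                rw [this]
                unfold prHi
                field_simp
              · simp only [if_neg hj, Finset.sum_const_zero, mul_zero]
            · -- second sum
              have e : ∑ h, (if h ∈ 𝒜 i then 0 else p i h)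
                  = margC p i - ∑ h ∈ 𝒜 i, p i h := by
                have : ∑ h, (if h ∈ 𝒜 i then (0:ℝ) else p i h)
                    = ∑ h, (p i h - (if h ∈ 𝒜 i then p i h else 0)) := by
                  apply Finset.sum_congr rfl
                  intro h _
                  split_ifs <;> ring
                rw [this, Finset.sum_sub_distrib, Finset.sum_ite_mem, Finset.univ_inter]
                rfl
              rw [e]
              have hpr : 1 - ε ≤ prHi p i (𝒜 i) := h𝒜 i hi
              have : (1 - ε) * margC p i ≤ ∑ h ∈ 𝒜 i, p i h := by
                have := mul_le_mul_of_nonneg_right hpr (le_of_lt hmpos)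
                unfold prHi at this
                rw [div_mul_cancel₀ _ (ne_of_gt hmpos)] at this
                linarith
              nlinarith
    · rw [if_neg hi, if_neg hi]
      have : ∀ h : ℋ, (if i = C' h then 0 else p i h) = 0 := by
        intro h
        have hi' := hnotlt i hi
        split_ifs
        · rfl
        · rw [hi', plast]
      rw [Finset.sum_congr rfl fun h _ => this h, Finset.sum_const_zero]
      norm_num
  -- sum over i
  have sumε : ∑ i : Fin (c+1), (if i.val < c then margC p i * ε else 0) = ε := by
    have e : ∀ i : Fin (c+1), (if i.val < c then margC p i * ε else 0) = margC p i * ε := by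
      intro i
      split_ifs with hi
      · rfl
      · rw [hnotlt i hi, hlast0]; ring
    rw [Finset.sum_congr rfl fun i _ => e i, ← Finset.sum_mul]
    have : ∑ i, margC p i = 1 := by
      unfold margC; exact hp1
    rw [this, one_mul]
  calc ∑ i, ∑ h, (if i = C' h then 0 else p i h)
      ≤ ∑ i : Fin (c+1), ((if i.val < c then
          margC p i * (∑ j : Fin (c + 1), if j.val < c ∧ j ≠ i then prHi p i (𝒜 j) else 0)
        else 0) + (if i.val < c then margC p i * ε else 0)) :=
        Finset.sum_le_sum fun i _ => bound_i i
    _ = (∑ i : Fin (c + 1), if i.val < c then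
          margC p i * (∑ j : Fin (c + 1), if j.val < c ∧ j ≠ i then prHi p i (𝒜 j) else 0)
        else 0) + ∑ i : Fin (c+1), (if i.val < c then margC p i * ε else 0) :=
        Finset.sum_add_distrib
    _ = _ := by rw [sumε]

end
end

section
/- Let ε, δ ∈ (0,1) with 1/√δ an integer greater than 1, and let p_{XYZMN} over finite sets 𝒳×𝒴×𝒵×ℳ×𝒩 satisfy the Markov conditions M−X−(Y,Z,N) and N−Y−(X,Z,M). Suppose R₁, R₂ satisfy Pr_{(x,y,z,m,n)~p}[ p_{M|X=x}(m)/p_{M|NZ=n,z}(m) ≤ δ·2^{R₁} and p_{N|Y=y}(n)/p_{N|MZ=m,z}(n) ≤ δ·2^{R₂} and (p_{M|X=x}(m)·p_{N|Y=y}(n))/p_{MN|Z=z}(m,n) ≤ δ⁴·2^{R₁+R₂−log log(max(|ℳ|,|𝒩|)/δ)} ] ≥ 1−ε. Let K be a positive integer such that K·p_{M|X=x}(m) and K·p_{N|Y=y}(n) are positive integers whenever defined, and extend p to a joint distribution p_{XYZMNEF} over 𝒳×𝒴×𝒵×ℳ×𝒩×[K]×[K] by letting, conditioned on (X,Y,Z,M,N)=(x,y,z,m,n),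 E and F be independent with E uniform on {1,…,K·p_{M|X=x}(m)} and F uniform on {1,…,K·p_{N|Y=y}(n)}. Let S be the uniform distribution on ℳ×[K] and T the uniform distribution on 𝒩×[K]. Then there exists a set 𝒜 ⊆ ℳ×𝒩×[K]×[K]×𝒵 such that: (i) Pr_{(m,n,e,f,z)~p_{MNEFZ}}[(m,n,e,f,z) ∈ 𝒜] ≥ 1−ε−5δ; (ii) Pr_{(m,e,z)~p_{MEZ}, (n,f)~T independent}[(m,n,e,f,z) ∈ 𝒜] ≤ δ·2^{R₂}/|𝒩|; (iii) Pr_{(m,e)~S, (n,f,z)~p_{NFZ} independent}[(m,n,e,f,z) ∈ 𝒜] ≤ δ·2^{R₁}/|ℳ|; and (iv) Pr_{(m,e)~S, (n,f)~T, z~p_Z all independent}[(m,n,e,f,z) ∈ 𝒜] ≤ δ·2^{R₁+R₂}/(|ℳ||𝒩|). -/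
open Finset Real
open scoped Classical

noncomputable section

variable {𝒳 𝒴 𝒵 ℳ 𝒩 : Type*} [Fintype 𝒳] [Fintype 𝒴] [Fintype 𝒵] [Fintype ℳ] [Fintype 𝒩]

/-- Marginal on `X`. -/
def margX (p : 𝒳 → 𝒴 → 𝒵 → ℳ → 𝒩 → ℝ) (x : 𝒳) : ℝ := ∑ y, ∑ z, ∑ m, ∑ n, p x y z m n

/-- Marginal on `Y`. -/
def margY (p : 𝒳 → 𝒴 → 𝒵 → ℳ → 𝒩 → ℝ) (y : 𝒴) : ℝ := ∑ x, ∑ z, ∑ m, ∑ n, p x y z m n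

/-- Marginal on `Z`. -/
def margZ (p : 𝒳 → 𝒴 → 𝒵 → ℳ → 𝒩 → ℝ) (z : 𝒵) : ℝ := ∑ x, ∑ y, ∑ m, ∑ n, p x y z m n

/-- Marginal on `(X, M)`. -/
def margXM (p : 𝒳 → 𝒴 → 𝒵 → ℳ → 𝒩 → ℝ) (x : 𝒳) (m : ℳ) : ℝ := ∑ y, ∑ z, ∑ n, p x y z m n

/-- Marginal on `(Y, N)`. -/
def margYN (p : 𝒳 → 𝒴 → 𝒵 → ℳ → 𝒩 → ℝ) (y : 𝒴) (n : 𝒩) : ℝ := ∑ x, ∑ z, ∑ m, p x y z m n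

/-- Marginal on `(X, Y, Z)`. -/
def margXYZ (p : 𝒳 → 𝒴 → 𝒵 → ℳ → 𝒩 → ℝ) (x : 𝒳) (y : 𝒴) (z : 𝒵) : ℝ := ∑ m, ∑ n, p x y z m n

/-- Marginal on `(M, Z)`. -/
def margMZ (p : 𝒳 → 𝒴 → 𝒵 → ℳ → 𝒩 → ℝ) (m : ℳ) (z : 𝒵) : ℝ := ∑ x, ∑ y, ∑ n, p x y z m n

/-- Marginal on `(N, Z)`. -/
def margNZ (p : 𝒳 → 𝒴 → 𝒵 → ℳ → 𝒩 → ℝ) (n : 𝒩) (z : 𝒵) : ℝ := ∑ x, ∑ y, ∑ m, p x y z m n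

/-- Marginal on `(M, N, Z)`. -/
def margMNZ (p : 𝒳 → 𝒴 → 𝒵 → ℳ → 𝒩 → ℝ) (m : ℳ) (n : 𝒩) (z : 𝒵) : ℝ := ∑ x, ∑ y, p x y z m n

/-- Conditional `p_{M|X=x}(m)`. -/
def condMX (p : 𝒳 → 𝒴 → 𝒵 → ℳ → 𝒩 → ℝ) (x : 𝒳) (m : ℳ) : ℝ := margXM p x m / margX p x

/-- Conditional `p_{N|Y=y}(n)`. -/
def condNY (p : 𝒳 → 𝒴 → 𝒵 → ℳ → 𝒩 → ℝ) (y : 𝒴) (n : 𝒩) : ℝ := margYN p y n / margY p y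

/-- Conditional `p_{M|N=n,Z=z}(m)`. -/
def condM_NZ (p : 𝒳 → 𝒴 → 𝒵 → ℳ → 𝒩 → ℝ) (m : ℳ) (n : 𝒩) (z : 𝒵) : ℝ :=
  margMNZ p m n z / margNZ p n z

/-- Conditional `p_{N|M=m,Z=z}(n)`. -/
def condN_MZ (p : 𝒳 → 𝒴 → 𝒵 → ℳ → 𝒩 → ℝ) (n : 𝒩) (m : ℳ) (z : 𝒵) : ℝ :=
  margMNZ p m n z / margMZ p m z

/-- Conditional `p_{MN|Z=z}(m,n)`. -/
def condMN_Z (p : 𝒳 → 𝒴 → 𝒵 → ℳ → 𝒩 → ℝ) (m : ℳ) (n : 𝒩) (z : 𝒵) : ℝ :=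
  margMNZ p m n z / margZ p z

/-- `p` is a probability mass function. -/
def IsDist (p : 𝒳 → 𝒴 → 𝒵 → ℳ → 𝒩 → ℝ) : Prop :=
  (∀ x y z m n, 0 ≤ p x y z m n) ∧ (∑ x, ∑ y, ∑ z, ∑ m, ∑ n, p x y z m n) = 1

/-- The Markov conditions `M − X − (Y,Z,N)` and `N − Y − (X,Z,M)`:
`p(x,y,z,m,n) = p_{XYZ}(x,y,z) · p_{M|X=x}(m) · p_{N|Y=y}(n)` whenever `p_{XYZ}(x,y,z) > 0`. -/
def MarkovCond (p : 𝒳 → 𝒴 → 𝒵 → ℳ → 𝒩 → ℝ) : Prop :=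
  ∀ x y z m n, 0 < margXYZ p x y z →
    p x y z m n = margXYZ p x y z * condMX p x m * condNY p y n

/-- The extension of the distribution `p` (satisfying the Markov conditions) by random
variables `E, F` over `[K] × [K]` (modelled as `Fin K`, a value `e : Fin K` representing
the integer `e + 1`): conditioned on `(X,Y,Z,M,N) = (x,y,z,m,n)`, `E` and `F` are
independent, `E` uniform on `{1, …, K·p_{M|X=x}(m)}`, `F` uniform on
`{1, …, K·p_{N|Y=y}(n)}`. -/
def extEF (p : 𝒳 → 𝒴 → 𝒵 → ℳ → 𝒩 → ℝ) (K : ℕ)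
    (x : 𝒳) (y : 𝒴) (z : 𝒵) (m : ℳ) (n : 𝒩) (e f : Fin K) : ℝ :=
  p x y z m n *
    (if ((e : ℕ) : ℝ) + 1 ≤ (K : ℝ) * condMX p x m then 1 / ((K : ℝ) * condMX p x m) else 0) *
    (if ((f : ℕ) : ℝ) + 1 ≤ (K : ℝ) * condNY p y n then 1 / ((K : ℝ) * condNY p y n) else 0)

/-- Marginal of the extension on `(M, N, E, F, Z)`. -/
def extMNEFZ (p : 𝒳 → 𝒴 → 𝒵 → ℳ → 𝒩 → ℝ) (K : ℕ)
    (m : ℳ) (n : 𝒩) (e f : Fin K) (z : 𝒵) : ℝ :=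
  ∑ x, ∑ y, extEF p K x y z m n e f

/-- Marginal of the extension on `(M, E, Z)`. -/
def extMEZ (p : 𝒳 → 𝒴 → 𝒵 → ℳ → 𝒩 → ℝ) (K : ℕ) (m : ℳ) (e : Fin K) (z : 𝒵) : ℝ :=
  ∑ n, ∑ f, extMNEFZ p K m n e f z

/-- Marginal of the extension on `(N, F, Z)`. -/
def extNFZ (p : 𝒳 → 𝒴 → 𝒵 → ℳ → 𝒩 → ℝ) (K : ℕ) (n : 𝒩) (f : Fin K) (z : 𝒵) : ℝ :=
  ∑ m, ∑ e, extMNEFZ p K m n e f z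


-- ===== generic auxiliary lemmas =====
section Aux


/-- positive part of log -/
def posLog (x : ℝ) : ℝ := Real.log (max 1 x)

lemma posLog_nonneg (x : ℝ) : 0 ≤ _root_.posLog x :=
  Real.log_nonneg (le_max_left 1 x)

lemma posLog_mono {x y : ℝ} (h : x ≤ y) : _root_.posLog x ≤ _root_.posLog y :=
  Real.log_le_log (by positivity) (max_le_max le_rfl h)

lemma posLog_mul_le {s t : ℝ} (hs : 1 ≤ s) : _root_.posLog (s * t) ≤ Real.log s + _root_.posLog t := by
  have hs0 : 0 < s := lt_of_lt_of_le one_pos hs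
  have h1 : max 1 (s * t) ≤ s * max 1 t := by
    rcases le_total (s * t) 1 with h | h
    · rw [max_eq_left h]
      calc (1:ℝ) = 1 * 1 := by ring
      _ ≤ s * max 1 t := by
          apply mul_le_mul hs (le_max_left 1 t) one_pos.le hs0.le
    · rw [max_eq_right h]
      exact mul_le_mul_of_nonneg_left (le_max_right 1 t) hs0.le
  calc _root_.posLog (s * t) ≤ Real.log (s * max 1 t) :=
        Real.log_le_log (by positivity) h1
  _ = Real.log s + _root_.posLog t := by
      rw [Real.log_mul (ne_of_gt hs0) (by positivity)]; rfl

lemma sum_ind_range_le (n : ℕ) (Q : ℕ → Prop) (B : ℝ) (hB : 0 ≤ B)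
    (h : ∀ s, Q s → (s : ℝ) + 1 ≤ B) :
    ∑ s ∈ range n, (if Q s then (1:ℝ) else 0) ≤ B := by
  classical
  rw [← Finset.sum_filter]
  rw [Finset.sum_const, nsmul_eq_mul, mul_one]
  calc ((filter (fun s => Q s) (range n)).card : ℝ) ≤ ((Nat.floor B : ℕ) : ℝ) := by
        have hsub : filter (fun s => Q s) (range n) ⊆ range (Nat.floor B) := by
          intro s hs
          simp only [mem_filter, mem_range] at hs
          have := h s hs.2
          have : ((s+1 : ℕ) : ℝ) ≤ B := by push_cast; linarith
          have := Nat.le_floor this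
          simp only [mem_range]; omega
        have := Finset.card_le_card hsub
        simp only [Finset.card_range] at this
        exact_mod_cast this
  _ ≤ B := Nat.floor_le hB

lemma sum_ind_fin_le {K : ℕ} (Q : Fin K → Prop) (B : ℝ) (hB : 0 ≤ B)
    (h : ∀ f : Fin K, Q f → ((f : ℕ) : ℝ) + 1 ≤ B) :
    ∑ f : Fin K, (if Q f then (1:ℝ) else 0) ≤ B := by
  classical
  rw [← Finset.sum_filter, Finset.sum_const, nsmul_eq_mul, mul_one]
  calc ((filter (fun f => Q f) (univ : Finset (Fin K))).card : ℝ)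
      ≤ ((Nat.floor B : ℕ) : ℝ) := by
        have hle : (filter (fun f => Q f) (univ : Finset (Fin K))).card
            ≤ (range (Nat.floor B)).card := by
          refine Finset.card_le_card_of_injOn (fun f => (f : ℕ)) ?_ ?_
          · intro f hf
            simp only [mem_coe, mem_filter, mem_univ, true_and] at hf
            have := h f hf
            have h2 : (((f:ℕ)+1 : ℕ) : ℝ) ≤ B := by push_cast; linarith
            have := Nat.le_floor h2
            simp only [mem_coe, mem_range]; omega
          · intro a _ b _ hab
            exact Fin.val_injective hab
        simp only [Finset.card_range] at hle
        exact_mod_cast hle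
  _ ≤ B := Nat.floor_le hB

lemma sum_hyper {K : ℕ} (W H C : ℝ) (hH : 0 < H) (hC : 0 < C) :
    ∑ s ∈ range K, (if (s:ℝ)+1 ≤ W then min H (C/((s:ℝ)+1)) else 0)
      ≤ C * (2 + _root_.posLog (W * H / C)) := by
  classical
  set D : ℝ := C / H with hDdef
  have hD : 0 < D := by positivity
  set g : ℕ → ℝ := fun s => Real.log (max D (min (s:ℝ) W)) with hgdef
  have hmaxpos : ∀ s : ℕ, 0 < max D (min (s:ℝ) W) := fun s => lt_max_of_lt_left hD
  have hgmono : ∀ s t : ℕ, s ≤ t → g s ≤ g t := by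
    intro s t hst
    apply Real.log_le_log (hmaxpos s)
    exact max_le_max le_rfl (min_le_min (by exact_mod_cast hst) le_rfl)
  have hpoint : ∀ s ∈ range K,
      (if (s:ℝ)+1 ≤ W then min H (C/((s:ℝ)+1)) else 0)
        ≤ C * (g (s+1) - g s) + (if (s:ℝ)+1 ≤ D+1 then min H C else 0) := by
    intro s _
    have hfirst : 0 ≤ C * (g (s+1) - g s) := by
      have := hgmono s (s+1) (Nat.le_succ s)
      nlinarith
    by_cases hW : (s:ℝ)+1 ≤ W
    · rw [if_pos hW]
      by_cases hDs : (s:ℝ)+1 ≤ D+1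
      · rw [if_pos hDs]
        have : min H (C/((s:ℝ)+1)) ≤ min H C := by
          apply min_le_min le_rfl
          apply div_le_self hC.le
          have : (0:ℝ) ≤ (s:ℝ) := Nat.cast_nonneg s
          linarith
        linarith
      · rw [if_neg hDs]
        push_neg at hDs
        have hsD : D < (s:ℝ) := by linarith
        have hs0 : (0:ℝ) < (s:ℝ) := lt_trans hD hsD
        have hg1 : g (s+1) = Real.log ((s:ℝ)+1) := by
          simp only [hgdef]
          have h1 : min ((s+1:ℕ):ℝ) W = (s:ℝ)+1 := by
            push_cast; exact min_eq_left hW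
          rw [h1]
          rw [max_eq_right (by linarith)]
        have hg0 : g s = Real.log (s:ℝ) := by
          simp only [hgdef]
          have h1 : min ((s:ℕ):ℝ) W = (s:ℝ) := min_eq_left (by linarith)
          rw [h1, max_eq_right hsD.le]
        have hlog : 1/((s:ℝ)+1) ≤ Real.log ((s:ℝ)+1) - Real.log (s:ℝ) := by
          have h2 : Real.log ((s:ℝ)/((s:ℝ)+1)) ≤ (s:ℝ)/((s:ℝ)+1) - 1 :=
            Real.log_le_sub_one_of_pos (by positivity)
          rw [Real.log_div (ne_of_gt hs0) (by positivity)] at h2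
          have h3 : (s:ℝ)/((s:ℝ)+1) - 1 = -(1/((s:ℝ)+1)) := by
            field_simp; ring
          rw [h3] at h2
          linarith
        have : min H (C/((s:ℝ)+1)) ≤ C * (g (s+1) - g s) := by
          rw [hg1, hg0]
          calc min H (C/((s:ℝ)+1)) ≤ C/((s:ℝ)+1) := min_le_right _ _
          _ = C * (1/((s:ℝ)+1)) := by ring
          _ ≤ C * (Real.log ((s:ℝ)+1) - Real.log (s:ℝ)) := by
              apply mul_le_mul_of_nonneg_left hlog hC.le
        linarith
    · rw [if_neg hW]
      have hind : (0:ℝ) ≤ (if (s:ℝ)+1 ≤ D+1 then min H C else 0) := by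
        split
        · exact le_min hH.le hC.le
        · exact le_rfl
      linarith
  have hsum := Finset.sum_le_sum hpoint
  have htel : ∑ s ∈ range K, (C * (g (s+1) - g s) + (if (s:ℝ)+1 ≤ D+1 then min H C else 0))
      = C * (g K - g 0) + ∑ s ∈ range K, (if (s:ℝ)+1 ≤ D+1 then min H C else 0) := by
    rw [Finset.sum_add_distrib, ← Finset.mul_sum, Finset.sum_range_sub (fun s => g s) K]
  have hindsum : ∑ s ∈ range K, (if (s:ℝ)+1 ≤ D+1 then min H C else 0) ≤ 2 * C := by
    have h1 : ∑ s ∈ range K, (if (s:ℝ)+1 ≤ D+1 then min H C else 0)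
        = min H C * ∑ s ∈ range K, (if (s:ℝ)+1 ≤ D+1 then (1:ℝ) else 0) := by
      rw [Finset.mul_sum]
      apply Finset.sum_congr rfl
      intro s _
      split <;> ring
    rw [h1]
    have h2 : ∑ s ∈ range K, (if (s:ℝ)+1 ≤ D+1 then (1:ℝ) else 0) ≤ D + 1 :=
      sum_ind_range_le K _ (D+1) (by positivity) (fun s hs => hs)
    have hmin0 : 0 ≤ min H C := le_min hH.le hC.le
    calc min H C * ∑ s ∈ range K, (if (s:ℝ)+1 ≤ D+1 then (1:ℝ) else 0)
        ≤ min H C * (D + 1) := mul_le_mul_of_nonneg_left h2 hmin0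
    _ = min H C * D + min H C := by ring
    _ ≤ H * D + C := by
        have := min_le_left H C
        have := min_le_right H C
        nlinarith
    _ = 2 * C := by
        rw [hDdef]
        field_simp
        ring
  have hg0 : g 0 = Real.log D := by
    simp only [hgdef]
    simp only [Nat.cast_zero]
    have h1 : min (0:ℝ) W ≤ D := le_trans (min_le_left _ _) hD.le
    rw [max_eq_left h1]
  have hgK : g K - g 0 ≤ _root_.posLog (W * H / C) := by
    rw [hg0]
    have h1 : g K ≤ Real.log (max D W) := by
      apply Real.log_le_log (hmaxpos K)
      exact max_le_max le_rfl (min_le_right _ _)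
    have h2 : Real.log (max D W) - Real.log D = Real.log (max D W / D) := by
      rw [Real.log_div (ne_of_gt (lt_max_of_lt_left hD)) (ne_of_gt hD)]
    have h3 : max D W / D = max 1 (W / D) := by
      rcases le_total W D with h | h
      · rw [max_eq_left h, div_self (ne_of_gt hD), max_eq_left ((div_le_one hD).mpr h)]
      · rw [max_eq_right h, max_eq_right ((one_le_div hD).mpr h)]
    have h4 : W / D = W * H / C := by
      rw [hDdef, div_div_eq_mul_div]
    have h5 : Real.log (max D W) - Real.log D = _root_.posLog (W * H / C) := by
      rw [h2, h3, h4]; rfl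
    linarith
  calc ∑ s ∈ range K, (if (s:ℝ)+1 ≤ W then min H (C/((s:ℝ)+1)) else 0)
      ≤ C * (g K - g 0) + ∑ s ∈ range K, (if (s:ℝ)+1 ≤ D+1 then min H C else 0) := by
        rw [← htel]; exact hsum
  _ ≤ C * _root_.posLog (W * H / C) + 2 * C := by
      have := mul_le_mul_of_nonneg_left hgK hC.le
      linarith
  _ = C * (2 + _root_.posLog (W * H / C)) := by ring

lemma count_hyper {K : ℕ} (Q : Fin K → Fin K → Prop) (W H C : ℝ) (hH : 0 < H) (hC : 0 < C)
    (h : ∀ e f, Q e f → (((e:ℕ):ℝ)+1 ≤ W ∧ ((f:ℕ):ℝ)+1 ≤ H ∧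
      (((e:ℕ):ℝ)+1)*(((f:ℕ):ℝ)+1) ≤ C)) :
    ∑ e : Fin K, ∑ f : Fin K, (if Q e f then (1:ℝ) else 0)
      ≤ C * (2 + _root_.posLog (W*H/C)) := by
  classical
  have step : ∀ e : Fin K, ∑ f : Fin K, (if Q e f then (1:ℝ) else 0)
      ≤ (if ((e:ℕ):ℝ)+1 ≤ W then min H (C/(((e:ℕ):ℝ)+1)) else 0) := by
    intro e
    by_cases hex : ∃ f, Q e f
    · obtain ⟨f₀, hf₀⟩ := hex
      rw [if_pos (h e f₀ hf₀).1]
      have hpos : (0:ℝ) < ((e:ℕ):ℝ)+1 := by positivity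
      apply sum_ind_fin_le _ _ (le_min hH.le (by positivity))
      intro f hf
      refine le_min (h e f hf).2.1 ?_
      rw [le_div_iff₀ hpos]
      have := (h e f hf).2.2
      nlinarith
    · push_neg at hex
      have : ∑ f : Fin K, (if Q e f then (1:ℝ) else 0) = 0 :=
        Finset.sum_eq_zero (fun f _ => if_neg (hex f))
      rw [this]
      split
      · exact le_min hH.le (by positivity)
      · exact le_rfl
  calc ∑ e : Fin K, ∑ f : Fin K, (if Q e f then (1:ℝ) else 0)
      ≤ ∑ e : Fin K, (if ((e:ℕ):ℝ)+1 ≤ W then min H (C/(((e:ℕ):ℝ)+1)) else 0) :=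
        Finset.sum_le_sum (fun e _ => step e)
  _ = ∑ s ∈ range K, (if (s:ℝ)+1 ≤ W then min H (C/((s:ℝ)+1)) else 0) :=
      Fin.sum_univ_eq_sum_range (fun s => if (s:ℝ)+1 ≤ W then min H (C/((s:ℝ)+1)) else 0) K
  _ ≤ C * (2 + _root_.posLog (W*H/C)) := sum_hyper W H C hH hC

lemma sum_mul_posLog_inv_le {α : Type*} [Fintype α] (P : α → ℝ) (h0 : ∀ a, 0 ≤ P a)
    (h1 : ∑ a, P a = 1) : ∑ a, P a * _root_.posLog (1 / P a) ≤ Real.log (Fintype.card α) := by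
  have hne : Nonempty α := by
    by_contra hc
    rw [not_nonempty_iff] at hc
    rw [Finset.univ_eq_empty, Finset.sum_empty] at h1
    norm_num at h1
  have hc0 : (0:ℝ) < (Fintype.card α : ℝ) := by
    exact_mod_cast Fintype.card_pos
  set c := (Fintype.card α : ℝ) with hcdef
  have hpt : ∀ a, P a * _root_.posLog (1/P a) ≤ 1/c - P a + P a * Real.log c := by
    intro a
    rcases eq_or_lt_of_le (h0 a) with h | h
    · rw [← h]
      have h2 : (0:ℝ) ≤ 1/c := by positivity
      simp only [zero_mul, sub_zero, zero_mul, add_zero]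
      linarith
    · have hP1 : P a ≤ 1 := by
        have h3 := Finset.single_le_sum (f := P) (fun i _ => h0 i) (Finset.mem_univ a)
        rw [h1] at h3; exact h3
      have hinv : (1:ℝ) ≤ 1 / P a := by
        rw [le_div_iff₀ h]; linarith
      have hpl : _root_.posLog (1/P a) = Real.log (1/P a) := by
        rw [_root_.posLog, max_eq_right hinv]
      rw [hpl]
      have e2 : Real.log (1/P a) = Real.log (1/(P a * c)) + Real.log c := by
        rw [← Real.log_mul (by positivity) (ne_of_gt hc0)]
        congr 1
        field_simp
      have e1 : Real.log (1/(P a * c)) ≤ 1/(P a * c) - 1 :=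
        Real.log_le_sub_one_of_pos (by positivity)
      have hlog : Real.log (1/P a) ≤ (1/(P a * c) - 1) + Real.log c := by
        rw [e2]; linarith
      calc P a * Real.log (1/P a) ≤ P a * ((1/(P a * c) - 1) + Real.log c) :=
            mul_le_mul_of_nonneg_left hlog (h0 a)
      _ = 1/c - P a + P a * Real.log c := by
          field_simp
  calc ∑ a, P a * _root_.posLog (1/P a) ≤ ∑ a, (1/c - P a + P a * Real.log c) :=
        Finset.sum_le_sum (fun a _ => hpt a)
  _ = Real.log c := by
      rw [Finset.sum_add_distrib, Finset.sum_sub_distrib, Finset.sum_const, ← Finset.sum_mul, h1,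
        Finset.card_univ, nsmul_eq_mul, ← hcdef]
      field_simp; ring

end Aux

-- ===== sum rotation lemmas =====
section Rot
variable {A B C D E F G : Type*} [Fintype A] [Fintype B] [Fintype C] [Fintype D]
  [Fintype E] [Fintype F] [Fintype G]

lemma rot2 (f : A → B → ℝ) : ∑ a, ∑ b, f a b = ∑ b, ∑ a, f a b := Finset.sum_comm

lemma rot3 (f : A → B → C → ℝ) : ∑ a, ∑ b, ∑ c, f a b c = ∑ c, ∑ a, ∑ b, f a b c := by
  calc ∑ a, ∑ b, ∑ c, f a b c = ∑ a, ∑ c, ∑ b, f a b c :=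
        Finset.sum_congr rfl (fun a _ => Finset.sum_comm)
  _ = ∑ c, ∑ a, ∑ b, f a b c := Finset.sum_comm

lemma rot4 (f : A → B → C → D → ℝ) :
    ∑ a, ∑ b, ∑ c, ∑ d, f a b c d = ∑ d, ∑ a, ∑ b, ∑ c, f a b c d := by
  calc ∑ a, ∑ b, ∑ c, ∑ d, f a b c d = ∑ a, ∑ d, ∑ b, ∑ c, f a b c d :=
        Finset.sum_congr rfl (fun a _ => rot3 (f a))
  _ = ∑ d, ∑ a, ∑ b, ∑ c, f a b c d := Finset.sum_comm

lemma rot5 (f : A → B → C → D → E → ℝ) :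
    ∑ a, ∑ b, ∑ c, ∑ d, ∑ e, f a b c d e = ∑ e, ∑ a, ∑ b, ∑ c, ∑ d, f a b c d e := by
  calc ∑ a, ∑ b, ∑ c, ∑ d, ∑ e, f a b c d e = ∑ a, ∑ e, ∑ b, ∑ c, ∑ d, f a b c d e :=
        Finset.sum_congr rfl (fun a _ => rot4 (f a))
  _ = _ := Finset.sum_comm

lemma rot6 (f : A → B → C → D → E → F → ℝ) :
    ∑ a, ∑ b, ∑ c, ∑ d, ∑ e, ∑ g, f a b c d e g
      = ∑ g, ∑ a, ∑ b, ∑ c, ∑ d, ∑ e, f a b c d e g := by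
  calc ∑ a, ∑ b, ∑ c, ∑ d, ∑ e, ∑ g, f a b c d e g
      = ∑ a, ∑ g, ∑ b, ∑ c, ∑ d, ∑ e, f a b c d e g :=
        Finset.sum_congr rfl (fun a _ => rot5 (f a))
  _ = _ := Finset.sum_comm

lemma rot7 (f : A → B → C → D → E → F → G → ℝ) :
    ∑ a, ∑ b, ∑ c, ∑ d, ∑ e, ∑ g, ∑ h, f a b c d e g h
      = ∑ h, ∑ a, ∑ b, ∑ c, ∑ d, ∑ e, ∑ g, f a b c d e g h := by
  calc ∑ a, ∑ b, ∑ c, ∑ d, ∑ e, ∑ g, ∑ h, f a b c d e g h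
      = ∑ a, ∑ h, ∑ b, ∑ c, ∑ d, ∑ e, ∑ g, f a b c d e g h :=
        Finset.sum_congr rfl (fun a _ => rot6 (f a))
  _ = _ := Finset.sum_comm

end Rot

-- ===== marginal lemmas =====
section Marg
variable {p : 𝒳 → 𝒴 → 𝒵 → ℳ → 𝒩 → ℝ}

lemma margX_nonneg (h0 : ∀ x y z m n, 0 ≤ p x y z m n) (x : 𝒳) : 0 ≤ margX p x := by
  unfold margX; exact Finset.sum_nonneg fun _ _ => Finset.sum_nonneg fun _ _ => Finset.sum_nonneg fun _ _ => Finset.sum_nonneg fun _ _ => h0 _ _ _ _ _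

lemma margY_nonneg (h0 : ∀ x y z m n, 0 ≤ p x y z m n) (y : 𝒴) : 0 ≤ margY p y := by
  unfold margY; exact Finset.sum_nonneg fun _ _ => Finset.sum_nonneg fun _ _ => Finset.sum_nonneg fun _ _ => Finset.sum_nonneg fun _ _ => h0 _ _ _ _ _

lemma margZ_nonneg (h0 : ∀ x y z m n, 0 ≤ p x y z m n) (z : 𝒵) : 0 ≤ margZ p z := by
  unfold margZ; exact Finset.sum_nonneg fun _ _ => Finset.sum_nonneg fun _ _ => Finset.sum_nonneg fun _ _ => Finset.sum_nonneg fun _ _ => h0 _ _ _ _ _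

lemma margXM_nonneg (h0 : ∀ x y z m n, 0 ≤ p x y z m n) (x : 𝒳) (m : ℳ) :
    0 ≤ margXM p x m := by unfold margXM; exact Finset.sum_nonneg fun _ _ => Finset.sum_nonneg fun _ _ => Finset.sum_nonneg fun _ _ => h0 _ _ _ _ _

lemma margYN_nonneg (h0 : ∀ x y z m n, 0 ≤ p x y z m n) (y : 𝒴) (n : 𝒩) :
    0 ≤ margYN p y n := by unfold margYN; exact Finset.sum_nonneg fun _ _ => Finset.sum_nonneg fun _ _ => Finset.sum_nonneg fun _ _ => h0 _ _ _ _ _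

lemma margMZ_nonneg (h0 : ∀ x y z m n, 0 ≤ p x y z m n) (m : ℳ) (z : 𝒵) :
    0 ≤ margMZ p m z := by unfold margMZ; exact Finset.sum_nonneg fun _ _ => Finset.sum_nonneg fun _ _ => Finset.sum_nonneg fun _ _ => h0 _ _ _ _ _

lemma margNZ_nonneg (h0 : ∀ x y z m n, 0 ≤ p x y z m n) (n : 𝒩) (z : 𝒵) :
    0 ≤ margNZ p n z := by unfold margNZ; exact Finset.sum_nonneg fun _ _ => Finset.sum_nonneg fun _ _ => Finset.sum_nonneg fun _ _ => h0 _ _ _ _ _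

lemma margMNZ_nonneg (h0 : ∀ x y z m n, 0 ≤ p x y z m n) (m : ℳ) (n : 𝒩) (z : 𝒵) :
    0 ≤ margMNZ p m n z := by unfold margMNZ; exact Finset.sum_nonneg fun _ _ => Finset.sum_nonneg fun _ _ => h0 _ _ _ _ _

lemma condMX_nonneg (h0 : ∀ x y z m n, 0 ≤ p x y z m n) (x : 𝒳) (m : ℳ) :
    0 ≤ condMX p x m := div_nonneg (margXM_nonneg h0 x m) (margX_nonneg h0 x)

lemma condNY_nonneg (h0 : ∀ x y z m n, 0 ≤ p x y z m n) (y : 𝒴) (n : 𝒩) :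
    0 ≤ condNY p y n := div_nonneg (margYN_nonneg h0 y n) (margY_nonneg h0 y)

lemma margX_eq (x : 𝒳) : margX p x = ∑ m, margXM p x m := by
  unfold margX margXM
  exact rot3 (fun y z m => ∑ n, p x y z m n)

lemma margY_eq (y : 𝒴) : margY p y = ∑ n, margYN p y n := by
  unfold margY margYN
  exact rot4 (fun x z m n => p x y z m n)

lemma margMZ_eq (m : ℳ) (z : 𝒵) : margMZ p m z = ∑ n, margMNZ p m n z := by
  unfold margMZ margMNZ
  exact rot3 (fun x y n => p x y z m n)

lemma margNZ_eq (n : 𝒩) (z : 𝒵) : margNZ p n z = ∑ m, margMNZ p m n z := by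
  unfold margNZ margMNZ
  exact rot3 (fun x y m => p x y z m n)

lemma margZ_eqMZ (z : 𝒵) : margZ p z = ∑ m, margMZ p m z := by
  unfold margZ margMZ
  exact rot3 (fun x y m => ∑ n, p x y z m n)

lemma sum_margZ (hdist : IsDist p) : ∑ z, margZ p z = 1 := by
  unfold margZ
  rw [← rot3 (fun x y z => ∑ m, ∑ n, p x y z m n)]
  exact hdist.2

lemma p_le_margMNZ (h0 : ∀ x y z m n, 0 ≤ p x y z m n) (x : 𝒳) (y : 𝒴) (z : 𝒵) (m : ℳ) (n : 𝒩) :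
    p x y z m n ≤ margMNZ p m n z := by
  unfold margMNZ
  calc p x y z m n ≤ ∑ y', p x y' z m n :=
        Finset.single_le_sum (fun y' _ => h0 x y' z m n) (Finset.mem_univ y)
  _ ≤ ∑ x', ∑ y', p x' y' z m n :=
      Finset.single_le_sum (f := fun x' => ∑ y', p x' y' z m n)
        (fun x' _ => Finset.sum_nonneg (fun y' _ => h0 x' y' z m n)) (Finset.mem_univ x)

lemma p_le_margXM (h0 : ∀ x y z m n, 0 ≤ p x y z m n) (x : 𝒳) (y : 𝒴) (z : 𝒵) (m : ℳ) (n : 𝒩) :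
    p x y z m n ≤ margXM p x m := by
  unfold margXM
  calc p x y z m n ≤ ∑ n', p x y z m n' :=
        Finset.single_le_sum (fun n' _ => h0 x y z m n') (Finset.mem_univ n)
  _ ≤ ∑ z', ∑ n', p x y z' m n' :=
      Finset.single_le_sum (f := fun z' => ∑ n', p x y z' m n')
        (fun z' _ => Finset.sum_nonneg (fun n' _ => h0 x y z' m n')) (Finset.mem_univ z)
  _ ≤ ∑ y', ∑ z', ∑ n', p x y' z' m n' :=
      Finset.single_le_sum (f := fun y' => ∑ z', ∑ n', p x y' z' m n')
        (fun y' _ => Finset.sum_nonneg fun z' _ => Finset.sum_nonneg fun n' _ => h0 x y' z' m n')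
        (Finset.mem_univ y)

lemma p_le_margYN (h0 : ∀ x y z m n, 0 ≤ p x y z m n) (x : 𝒳) (y : 𝒴) (z : 𝒵) (m : ℳ) (n : 𝒩) :
    p x y z m n ≤ margYN p y n := by
  unfold margYN
  calc p x y z m n ≤ ∑ m', p x y z m' n :=
        Finset.single_le_sum (fun m' _ => h0 x y z m' n) (Finset.mem_univ m)
  _ ≤ ∑ z', ∑ m', p x y z' m' n :=
      Finset.single_le_sum (f := fun z' => ∑ m', p x y z' m' n)
        (fun z' _ => Finset.sum_nonneg (fun m' _ => h0 x y z' m' n)) (Finset.mem_univ z)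
  _ ≤ ∑ x', ∑ z', ∑ m', p x' y z' m' n :=
      Finset.single_le_sum (f := fun x' => ∑ z', ∑ m', p x' y z' m' n)
        (fun x' _ => Finset.sum_nonneg fun z' _ => Finset.sum_nonneg fun m' _ => h0 x' y z' m' n)
        (Finset.mem_univ x)

lemma margXM_le_margX (h0 : ∀ x y z m n, 0 ≤ p x y z m n) (x : 𝒳) (m : ℳ) :
    margXM p x m ≤ margX p x := by
  rw [margX_eq]
  exact Finset.single_le_sum (fun m' _ => margXM_nonneg h0 x m') (Finset.mem_univ m)

lemma margYN_le_margY (h0 : ∀ x y z m n, 0 ≤ p x y z m n) (y : 𝒴) (n : 𝒩) :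
    margYN p y n ≤ margY p y := by
  rw [margY_eq]
  exact Finset.single_le_sum (fun n' _ => margYN_nonneg h0 y n') (Finset.mem_univ n)

lemma margMNZ_le_margMZ (h0 : ∀ x y z m n, 0 ≤ p x y z m n) (m : ℳ) (n : 𝒩) (z : 𝒵) :
    margMNZ p m n z ≤ margMZ p m z := by
  rw [margMZ_eq]
  exact Finset.single_le_sum (fun n' _ => margMNZ_nonneg h0 m n' z) (Finset.mem_univ n)

lemma margMNZ_le_margNZ (h0 : ∀ x y z m n, 0 ≤ p x y z m n) (m : ℳ) (n : 𝒩) (z : 𝒵) :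
    margMNZ p m n z ≤ margNZ p n z := by
  rw [margNZ_eq]
  exact Finset.single_le_sum (fun m' _ => margMNZ_nonneg h0 m' n z) (Finset.mem_univ m)

lemma margMZ_le_margZ (h0 : ∀ x y z m n, 0 ≤ p x y z m n) (m : ℳ) (z : 𝒵) :
    margMZ p m z ≤ margZ p z := by
  rw [margZ_eqMZ]
  exact Finset.single_le_sum (fun m' _ => margMZ_nonneg h0 m' z) (Finset.mem_univ m)

lemma condMX_le_one (h0 : ∀ x y z m n, 0 ≤ p x y z m n) (x : 𝒳) (m : ℳ) :
    condMX p x m ≤ 1 :=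
  div_le_one_of_le₀ (margXM_le_margX h0 x m) (margX_nonneg h0 x)

lemma condNY_le_one (h0 : ∀ x y z m n, 0 ≤ p x y z m n) (y : 𝒴) (n : 𝒩) :
    condNY p y n ≤ 1 :=
  div_le_one_of_le₀ (margYN_le_margY h0 y n) (margY_nonneg h0 y)

lemma sum_condN_MZ_le_one (m : ℳ) (z : 𝒵) : ∑ n, condN_MZ p n m z ≤ 1 := by
  unfold condN_MZ
  rw [← Finset.sum_div, ← margMZ_eq]
  exact div_self_le_one _

lemma sum_condM_NZ_le_one (n : 𝒩) (z : 𝒵) : ∑ m, condM_NZ p m n z ≤ 1 := by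
  unfold condM_NZ
  rw [← Finset.sum_div, ← margNZ_eq]
  exact div_self_le_one _

lemma sum_condMN_Z_n (m : ℳ) (z : 𝒵) :
    ∑ n, condMN_Z p m n z = margMZ p m z / margZ p z := by
  unfold condMN_Z
  rw [← Finset.sum_div, ← margMZ_eq]

end Marg


-- ===== permutation lemmas =====
section Perm
variable {T1 T2 T3 T4 T5 T6 T7 : Type*} [Fintype T1] [Fintype T2] [Fintype T3]
  [Fintype T4] [Fintype T5] [Fintype T6] [Fintype T7]

lemma permA (h : T1 → T2 → T3 → T4 → T5 → T6 → T7 → ℝ) :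
    ∑ m, ∑ e, ∑ z, ∑ n, ∑ f, ∑ x, ∑ y, h m e z n f x y
      = ∑ x, ∑ y, ∑ z, ∑ m, ∑ n, ∑ e, ∑ f, h m e z n f x y := by
  calc ∑ m, ∑ e, ∑ z, ∑ n, ∑ f, ∑ x, ∑ y, h m e z n f x y
      = ∑ y, ∑ m, ∑ e, ∑ z, ∑ n, ∑ f, ∑ x, h m e z n f x y := rot7 _
  _ = ∑ x, ∑ y, ∑ m, ∑ e, ∑ z, ∑ n, ∑ f, h m e z n f x y := rot7 _
  _ = ∑ x, ∑ y, ∑ z, ∑ m, ∑ e, ∑ n, ∑ f, h m e z n f x y :=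
      Finset.sum_congr rfl fun x _ => Finset.sum_congr rfl fun y _ => rot3 _
  _ = ∑ x, ∑ y, ∑ z, ∑ m, ∑ n, ∑ e, ∑ f, h m e z n f x y :=
      Finset.sum_congr rfl fun x _ => Finset.sum_congr rfl fun y _ =>
        Finset.sum_congr rfl fun z _ => Finset.sum_congr rfl fun m _ => rot2 _

lemma permB (h : T1 → T2 → T3 → T4 → T5 → T6 → T7 → ℝ) :
    ∑ n, ∑ f, ∑ z, ∑ m, ∑ e, ∑ x, ∑ y, h n f z m e x y
      = ∑ x, ∑ y, ∑ z, ∑ m, ∑ n, ∑ e, ∑ f, h n f z m e x y := by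
  calc ∑ n, ∑ f, ∑ z, ∑ m, ∑ e, ∑ x, ∑ y, h n f z m e x y
      = ∑ y, ∑ n, ∑ f, ∑ z, ∑ m, ∑ e, ∑ x, h n f z m e x y := rot7 _
  _ = ∑ x, ∑ y, ∑ n, ∑ f, ∑ z, ∑ m, ∑ e, h n f z m e x y := rot7 _
  _ = ∑ x, ∑ y, ∑ z, ∑ n, ∑ f, ∑ m, ∑ e, h n f z m e x y :=
      Finset.sum_congr rfl fun x _ => Finset.sum_congr rfl fun y _ => rot3 _
  _ = ∑ x, ∑ y, ∑ z, ∑ m, ∑ n, ∑ f, ∑ e, h n f z m e x y :=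
      Finset.sum_congr rfl fun x _ => Finset.sum_congr rfl fun y _ =>
        Finset.sum_congr rfl fun z _ => rot3 _
  _ = ∑ x, ∑ y, ∑ z, ∑ m, ∑ n, ∑ e, ∑ f, h n f z m e x y :=
      Finset.sum_congr rfl fun x _ => Finset.sum_congr rfl fun y _ =>
        Finset.sum_congr rfl fun z _ => Finset.sum_congr rfl fun m _ =>
          Finset.sum_congr rfl fun n _ => rot2 _

lemma permC (h : T1 → T2 → T3 → T4 → T5 → T6 → T7 → ℝ) :
    ∑ m, ∑ n, ∑ e, ∑ f, ∑ z, ∑ x, ∑ y, h m n e f z x y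
      = ∑ x, ∑ y, ∑ z, ∑ m, ∑ n, ∑ e, ∑ f, h m n e f z x y := by
  calc ∑ m, ∑ n, ∑ e, ∑ f, ∑ z, ∑ x, ∑ y, h m n e f z x y
      = ∑ y, ∑ m, ∑ n, ∑ e, ∑ f, ∑ z, ∑ x, h m n e f z x y := rot7 _
  _ = ∑ x, ∑ y, ∑ m, ∑ n, ∑ e, ∑ f, ∑ z, h m n e f z x y := rot7 _
  _ = ∑ z, ∑ x, ∑ y, ∑ m, ∑ n, ∑ e, ∑ f, h m n e f z x y := rot7 _
  _ = ∑ x, ∑ y, ∑ z, ∑ m, ∑ n, ∑ e, ∑ f, h m n e f z x y := (rot3 _).symm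

lemma permD (h : T1 → T2 → T3 → T4 → T5 → ℝ) :
    ∑ m, ∑ n, ∑ e, ∑ f, ∑ z, h m n e f z
      = ∑ m, ∑ e, ∑ z, ∑ n, ∑ f, h m n e f z := by
  refine Finset.sum_congr rfl fun m _ => ?_
  calc ∑ n, ∑ e, ∑ f, ∑ z, h m n e f z
      = ∑ e, ∑ n, ∑ f, ∑ z, h m n e f z := rot2 _
  _ = ∑ e, ∑ z, ∑ n, ∑ f, h m n e f z :=
      Finset.sum_congr rfl fun e _ => rot3 _

lemma permE (h : T1 → T2 → T3 → T4 → T5 → ℝ) :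
    ∑ m, ∑ n, ∑ e, ∑ f, ∑ z, h m n e f z
      = ∑ n, ∑ f, ∑ z, ∑ m, ∑ e, h m n e f z := by
  calc ∑ m, ∑ n, ∑ e, ∑ f, ∑ z, h m n e f z
      = ∑ n, ∑ m, ∑ e, ∑ f, ∑ z, h m n e f z := rot2 _
  _ = ∑ n, ∑ z, ∑ m, ∑ e, ∑ f, h m n e f z :=
      Finset.sum_congr rfl fun n _ => rot4 _
  _ = ∑ n, ∑ f, ∑ z, ∑ m, ∑ e, h m n e f z :=
      Finset.sum_congr rfl fun n _ => rot4 _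

end Perm

-- ===== indicator-sum lemmas =====
section IndSum

lemma sumI_le_one (K : ℕ) (c : ℝ) :
    ∑ e : Fin K, (if ((e:ℕ):ℝ)+1 ≤ (K:ℝ)*c then 1/((K:ℝ)*c) else 0) ≤ 1 := by
  by_cases h : 0 < (K:ℝ)*c
  · have heq : ∀ e : Fin K, (if ((e:ℕ):ℝ)+1 ≤ (K:ℝ)*c then 1/((K:ℝ)*c) else 0)
        = (1/((K:ℝ)*c)) * (if ((e:ℕ):ℝ)+1 ≤ (K:ℝ)*c then 1 else 0) := by
      intro e; split <;> ring
    rw [Finset.sum_congr rfl (fun e _ => heq e), ← Finset.mul_sum]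
    have hb := sum_ind_fin_le (fun e : Fin K => ((e:ℕ):ℝ)+1 ≤ (K:ℝ)*c) ((K:ℝ)*c) h.le
      (fun f hf => hf)
    calc (1/((K:ℝ)*c)) * ∑ e : Fin K, (if ((e:ℕ):ℝ)+1 ≤ (K:ℝ)*c then (1:ℝ) else 0)
        ≤ (1/((K:ℝ)*c)) * ((K:ℝ)*c) := mul_le_mul_of_nonneg_left hb (by positivity)
    _ = 1 := one_div_mul_cancel h.ne'
  · push_neg at h
    rw [Finset.sum_eq_zero]
    · norm_num
    · intro e _
      rw [if_neg]
      intro hc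
      have he : (0:ℝ) ≤ ((e:ℕ):ℝ) := Nat.cast_nonneg _
      linarith

lemma sumI_eq_one (K : ℕ) (c : ℝ) (hc1 : c ≤ 1)
    (hj : ∃ j : ℕ, 0 < j ∧ (j:ℝ) = (K:ℝ)*c) :
    ∑ e : Fin K, (if ((e:ℕ):ℝ)+1 ≤ (K:ℝ)*c then 1/((K:ℝ)*c) else 0) = 1 := by
  obtain ⟨j, hj0, hjK⟩ := hj
  have hKc : (0:ℝ) < (K:ℝ)*c := by
    rw [← hjK]; exact_mod_cast hj0
  have hcond : ∀ e : Fin K, (((e:ℕ):ℝ)+1 ≤ (K:ℝ)*c) ↔ ((e:ℕ) < j) := by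
    intro e
    rw [← hjK]
    constructor
    · intro hle
      have h2 : (((e:ℕ)+1:ℕ):ℝ) ≤ (j:ℝ) := by push_cast; linarith
      have h3 : (e:ℕ)+1 ≤ j := by exact_mod_cast h2
      omega
    · intro hlt
      have h2 : (e:ℕ)+1 ≤ j := hlt
      have h3 : (((e:ℕ)+1:ℕ):ℝ) ≤ (j:ℝ) := by exact_mod_cast h2
      push_cast at h3; linarith
  rw [Finset.sum_congr rfl (fun e _ => if_congr (hcond e) rfl rfl)]
  rw [Fin.sum_univ_eq_sum_range (fun s => if s < j then 1/((K:ℝ)*c) else 0) K]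
  rw [← Finset.sum_filter]
  have hjleK : j ≤ K := by
    have hcK : (K:ℝ)*c ≤ (K:ℝ) := by
      calc (K:ℝ)*c ≤ (K:ℝ)*1 := mul_le_mul_of_nonneg_left hc1 (Nat.cast_nonneg K)
      _ = K := mul_one _
    have : (j:ℝ) ≤ (K:ℝ) := by rw [hjK]; exact hcK
    exact_mod_cast this
  have hfil : filter (fun s => s < j) (range K) = range j := by
    ext s
    simp only [Finset.mem_filter, Finset.mem_range]
    omega
  rw [hfil, Finset.sum_const, Finset.card_range, nsmul_eq_mul, ← hjK]
  field_simp

end IndSum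

-- ===== total mass lemmas =====
section Tot
variable {p : 𝒳 → 𝒴 → 𝒵 → ℳ → 𝒩 → ℝ}

lemma inner_ef_le (h0 : ∀ x y z m n, 0 ≤ p x y z m n) (K : ℕ)
    (x : 𝒳) (y : 𝒴) (z : 𝒵) (m : ℳ) (n : 𝒩) :
    ∑ e : Fin K, ∑ f : Fin K, extEF p K x y z m n e f ≤ p x y z m n := by
  unfold extEF
  have hstep : ∀ e : Fin K,
      ∑ f : Fin K, (p x y z m n *
        (if ((e:ℕ):ℝ)+1 ≤ (K:ℝ)*condMX p x m then 1/((K:ℝ)*condMX p x m) else 0) *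
        (if ((f:ℕ):ℝ)+1 ≤ (K:ℝ)*condNY p y n then 1/((K:ℝ)*condNY p y n) else 0))
      = (p x y z m n *
        (if ((e:ℕ):ℝ)+1 ≤ (K:ℝ)*condMX p x m then 1/((K:ℝ)*condMX p x m) else 0)) *
        (∑ f : Fin K, (if ((f:ℕ):ℝ)+1 ≤ (K:ℝ)*condNY p y n then 1/((K:ℝ)*condNY p y n) else 0)) := by
    intro e
    rw [Finset.mul_sum]
  rw [Finset.sum_congr rfl (fun e _ => hstep e)]
  rw [← Finset.sum_mul]
  rw [← Finset.mul_sum]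
  set SE := ∑ e : Fin K, (if ((e:ℕ):ℝ)+1 ≤ (K:ℝ)*condMX p x m then 1/((K:ℝ)*condMX p x m) else 0) with hSE
  set SF := ∑ f : Fin K, (if ((f:ℕ):ℝ)+1 ≤ (K:ℝ)*condNY p y n then 1/((K:ℝ)*condNY p y n) else 0) with hSF
  have hSE0 : 0 ≤ SE := by
    rw [hSE]
    apply Finset.sum_nonneg
    intro e _
    split
    · apply div_nonneg zero_le_one
      exact mul_nonneg (Nat.cast_nonneg K) (condMX_nonneg h0 x m)
    · exact le_rfl
  have hSF0 : 0 ≤ SF := by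
    rw [hSF]
    apply Finset.sum_nonneg
    intro f _
    split
    · apply div_nonneg zero_le_one
      exact mul_nonneg (Nat.cast_nonneg K) (condNY_nonneg h0 y n)
    · exact le_rfl
  have hSE1 : SE ≤ 1 := sumI_le_one K (condMX p x m)
  have hSF1 : SF ≤ 1 := sumI_le_one K (condNY p y n)
  have hp := h0 x y z m n
  calc p x y z m n * SE * SF ≤ p x y z m n * SE * 1 :=
        mul_le_mul_of_nonneg_left hSF1 (by positivity)
  _ = p x y z m n * SE := by ring
  _ ≤ p x y z m n * 1 := mul_le_mul_of_nonneg_left hSE1 hp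
  _ = p x y z m n := by ring

lemma totMEZ (h0 : ∀ x y z m n, 0 ≤ p x y z m n) (hdist : IsDist p) (K : ℕ) :
    ∑ m, ∑ e : Fin K, ∑ z, extMEZ p K m e z ≤ 1 := by
  unfold extMEZ extMNEFZ
  rw [permA (fun m e z n f x y => extEF p K x y z m n e f)]
  calc ∑ x, ∑ y, ∑ z, ∑ m, ∑ n, ∑ e : Fin K, ∑ f : Fin K, extEF p K x y z m n e f
      ≤ ∑ x, ∑ y, ∑ z, ∑ m, ∑ n, p x y z m n := by
        refine Finset.sum_le_sum fun x _ => Finset.sum_le_sum fun y _ =>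
          Finset.sum_le_sum fun z _ => Finset.sum_le_sum fun m _ =>
          Finset.sum_le_sum fun n _ => ?_
        exact inner_ef_le h0 K x y z m n
  _ = 1 := hdist.2

lemma totNFZ (h0 : ∀ x y z m n, 0 ≤ p x y z m n) (hdist : IsDist p) (K : ℕ) :
    ∑ n, ∑ f : Fin K, ∑ z, extNFZ p K n f z ≤ 1 := by
  unfold extNFZ extMNEFZ
  rw [permB (fun n f z m e x y => extEF p K x y z m n e f)]
  calc ∑ x, ∑ y, ∑ z, ∑ m, ∑ n, ∑ e : Fin K, ∑ f : Fin K, extEF p K x y z m n e f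
      ≤ ∑ x, ∑ y, ∑ z, ∑ m, ∑ n, p x y z m n := by
        refine Finset.sum_le_sum fun x _ => Finset.sum_le_sum fun y _ =>
          Finset.sum_le_sum fun z _ => Finset.sum_le_sum fun m _ =>
          Finset.sum_le_sum fun n _ => ?_
        exact inner_ef_le h0 K x y z m n
  _ = 1 := hdist.2


lemma extEF_nonneg (h0 : ∀ x y z m n, 0 ≤ p x y z m n) (K : ℕ)
    (x : 𝒳) (y : 𝒴) (z : 𝒵) (m : ℳ) (n : 𝒩) (e f : Fin K) :
    0 ≤ extEF p K x y z m n e f := by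
  unfold extEF
  have hIe : (0:ℝ) ≤ (if ((e:ℕ):ℝ)+1 ≤ (K:ℝ)*condMX p x m
      then 1/((K:ℝ)*condMX p x m) else 0) := by
    split
    · exact div_nonneg zero_le_one (mul_nonneg (Nat.cast_nonneg K) (condMX_nonneg h0 x m))
    · exact le_rfl
  have hIf : (0:ℝ) ≤ (if ((f:ℕ):ℝ)+1 ≤ (K:ℝ)*condNY p y n
      then 1/((K:ℝ)*condNY p y n) else 0) := by
    split
    · exact div_nonneg zero_le_one (mul_nonneg (Nat.cast_nonneg K) (condNY_nonneg h0 y n))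
    · exact le_rfl
  exact mul_nonneg (mul_nonneg (h0 x y z m n) hIe) hIf

lemma extMNEFZ_nonneg (h0 : ∀ x y z m n, 0 ≤ p x y z m n) (K : ℕ)
    (m : ℳ) (n : 𝒩) (e f : Fin K) (z : 𝒵) : 0 ≤ extMNEFZ p K m n e f z :=
  Finset.sum_nonneg fun x _ => Finset.sum_nonneg fun y _ => extEF_nonneg h0 K x y z m n e f

lemma extMEZ_nonneg (h0 : ∀ x y z m n, 0 ≤ p x y z m n) (K : ℕ)
    (m : ℳ) (e : Fin K) (z : 𝒵) : 0 ≤ extMEZ p K m e z :=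
  Finset.sum_nonneg fun n _ => Finset.sum_nonneg fun f _ => extMNEFZ_nonneg h0 K m n e f z

lemma extNFZ_nonneg (h0 : ∀ x y z m n, 0 ≤ p x y z m n) (K : ℕ)
    (n : 𝒩) (f : Fin K) (z : 𝒵) : 0 ≤ extNFZ p K n f z :=
  Finset.sum_nonneg fun m _ => Finset.sum_nonneg fun e _ => extMNEFZ_nonneg h0 K m n e f z

lemma inner_ef_eq (h0 : ∀ x y z m n, 0 ≤ p x y z m n) (K : ℕ)
    (x : 𝒳) (y : 𝒴) (z : 𝒵) (m : ℳ) (n : 𝒩)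
    (hjE : ∃ j : ℕ, 0 < j ∧ (j:ℝ) = (K:ℝ)*condMX p x m)
    (hjF : ∃ j : ℕ, 0 < j ∧ (j:ℝ) = (K:ℝ)*condNY p y n) :
    ∑ e : Fin K, ∑ f : Fin K, extEF p K x y z m n e f = p x y z m n := by
  unfold extEF
  have hstep : ∀ e : Fin K,
      ∑ f : Fin K, (p x y z m n *
        (if ((e:ℕ):ℝ)+1 ≤ (K:ℝ)*condMX p x m then 1/((K:ℝ)*condMX p x m) else 0) *
        (if ((f:ℕ):ℝ)+1 ≤ (K:ℝ)*condNY p y n then 1/((K:ℝ)*condNY p y n) else 0))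
      = (p x y z m n *
        (if ((e:ℕ):ℝ)+1 ≤ (K:ℝ)*condMX p x m then 1/((K:ℝ)*condMX p x m) else 0)) *
        (∑ f : Fin K, (if ((f:ℕ):ℝ)+1 ≤ (K:ℝ)*condNY p y n then 1/((K:ℝ)*condNY p y n) else 0)) := by
    intro e
    rw [Finset.mul_sum]
  rw [Finset.sum_congr rfl (fun e _ => hstep e), ← Finset.sum_mul, ← Finset.mul_sum]
  rw [sumI_eq_one K (condMX p x m) (condMX_le_one h0 x m) hjE,
    sumI_eq_one K (condNY p y n) (condNY_le_one h0 y n) hjF]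
  ring

end Tot


-- ===== the acceptance predicate =====
section Pred
variable {p : 𝒳 → 𝒴 → 𝒵 → ℳ → 𝒩 → ℝ}

def GoodP (p : 𝒳 → 𝒴 → 𝒵 → ℳ → 𝒩 → ℝ) (δ R₁ R₂ L : ℝ)
    (x : 𝒳) (y : 𝒴) (z : 𝒵) (m : ℳ) (n : 𝒩) : Prop :=
  (condMX p x m / condM_NZ p m n z ≤ δ * (2:ℝ)^R₁ ∧
   condNY p y n / condN_MZ p n m z ≤ δ * (2:ℝ)^R₂ ∧
   condMX p x m * condNY p y n / condMN_Z p m n z ≤ δ^4 * (2:ℝ)^(R₁+R₂ - Real.logb 2 L)) ∧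
  0 < p x y z m n

def PredP (p : 𝒳 → 𝒴 → 𝒵 → ℳ → 𝒩 → ℝ) (K : ℕ) (δ R₁ R₂ L : ℝ)
    (m : ℳ) (n : 𝒩) (e f : Fin K) (z : 𝒵) : Prop :=
  ∃ x y, GoodP p δ R₁ R₂ L x y z m n ∧
    ((e:ℕ):ℝ)+1 ≤ (K:ℝ)*condMX p x m ∧ ((f:ℕ):ℝ)+1 ≤ (K:ℝ)*condNY p y n

lemma GoodP_pos (h0 : ∀ x y z m n, 0 ≤ p x y z m n) {δ R₁ R₂ L : ℝ}
    {x : 𝒳} {y : 𝒴} {z : 𝒵} {m : ℳ} {n : 𝒩} (hg : GoodP p δ R₁ R₂ L x y z m n) :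
    0 < margMNZ p m n z ∧ 0 < margMZ p m z ∧ 0 < margNZ p n z ∧ 0 < margZ p z ∧
      0 < margX p x ∧ 0 < margY p y := by
  have hp := hg.2
  have h1 : 0 < margMNZ p m n z := lt_of_lt_of_le hp (p_le_margMNZ h0 x y z m n)
  have h2 : 0 < margMZ p m z := lt_of_lt_of_le h1 (margMNZ_le_margMZ h0 m n z)
  have h3 : 0 < margNZ p n z := lt_of_lt_of_le h1 (margMNZ_le_margNZ h0 m n z)
  have h4 : 0 < margZ p z := lt_of_lt_of_le h2 (margMZ_le_margZ h0 m z)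
  have h5 : 0 < margX p x :=
    lt_of_lt_of_le (lt_of_lt_of_le hp (p_le_margXM h0 x y z m n)) (margXM_le_margX h0 x m)
  have h6 : 0 < margY p y :=
    lt_of_lt_of_le (lt_of_lt_of_le hp (p_le_margYN h0 x y z m n)) (margYN_le_margY h0 y n)
  exact ⟨h1, h2, h3, h4, h5, h6⟩

/-- fiber bound over `(n, f)` for fixed `(m, e, z)` -/
lemma fiberN (h0 : ∀ x y z m n, 0 ≤ p x y z m n) {K : ℕ} {δ R₁ R₂ L : ℝ}
    (hδ0 : 0 < δ) (m : ℳ) (e : Fin K) (z : 𝒵) :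
    ∑ n, ∑ f : Fin K, (if PredP p K δ R₁ R₂ L m n e f z then (1:ℝ) else 0)
      ≤ (K:ℝ)*(δ*(2:ℝ)^R₂) := by
  have h2R2 : (0:ℝ) < (2:ℝ)^R₂ := Real.rpow_pos_of_pos two_pos R₂
  have hstep : ∀ n, ∑ f : Fin K, (if PredP p K δ R₁ R₂ L m n e f z then (1:ℝ) else 0)
      ≤ (K:ℝ)*(δ*(2:ℝ)^R₂*condN_MZ p n m z) := by
    intro n
    apply sum_ind_fin_le
    · have := div_nonneg (margMNZ_nonneg h0 m n z) (margMZ_nonneg h0 m z)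
      have hc : 0 ≤ condN_MZ p n m z := this
      positivity
    · intro f hf
      obtain ⟨x, y, hg, _, hfc⟩ := hf
      obtain ⟨hq, hmz, -, -, -, -⟩ := GoodP_pos h0 hg
      have hbpos : 0 < condN_MZ p n m z := div_pos hq hmz
      have hcond2 := hg.1.2.1
      rw [div_le_iff₀ hbpos] at hcond2
      calc ((f:ℕ):ℝ)+1 ≤ (K:ℝ)*condNY p y n := hfc
      _ ≤ (K:ℝ)*(δ*(2:ℝ)^R₂*condN_MZ p n m z) :=
          mul_le_mul_of_nonneg_left (le_of_le_of_eq hcond2 (by ring)) (Nat.cast_nonneg K)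
  calc ∑ n, ∑ f : Fin K, (if PredP p K δ R₁ R₂ L m n e f z then (1:ℝ) else 0)
      ≤ ∑ n, (K:ℝ)*(δ*(2:ℝ)^R₂*condN_MZ p n m z) := Finset.sum_le_sum fun n _ => hstep n
  _ = (K:ℝ)*(δ*(2:ℝ)^R₂) * ∑ n, condN_MZ p n m z := by
      rw [Finset.mul_sum]
      exact Finset.sum_congr rfl fun n _ => by ring
  _ ≤ (K:ℝ)*(δ*(2:ℝ)^R₂) * 1 := by
      apply mul_le_mul_of_nonneg_left (sum_condN_MZ_le_one m z) (by positivity)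
  _ = (K:ℝ)*(δ*(2:ℝ)^R₂) := mul_one _

/-- fiber bound over `(m, e)` for fixed `(n, f, z)` -/
lemma fiberM (h0 : ∀ x y z m n, 0 ≤ p x y z m n) {K : ℕ} {δ R₁ R₂ L : ℝ}
    (hδ0 : 0 < δ) (n : 𝒩) (f : Fin K) (z : 𝒵) :
    ∑ m, ∑ e : Fin K, (if PredP p K δ R₁ R₂ L m n e f z then (1:ℝ) else 0)
      ≤ (K:ℝ)*(δ*(2:ℝ)^R₁) := by
  have h2R1 : (0:ℝ) < (2:ℝ)^R₁ := Real.rpow_pos_of_pos two_pos R₁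
  have hstep : ∀ m, ∑ e : Fin K, (if PredP p K δ R₁ R₂ L m n e f z then (1:ℝ) else 0)
      ≤ (K:ℝ)*(δ*(2:ℝ)^R₁*condM_NZ p m n z) := by
    intro m
    apply sum_ind_fin_le
    · have hc : 0 ≤ condM_NZ p m n z :=
        div_nonneg (margMNZ_nonneg h0 m n z) (margNZ_nonneg h0 n z)
      positivity
    · intro e he
      obtain ⟨x, y, hg, hec, -⟩ := he
      obtain ⟨hq, -, hnz, -, -, -⟩ := GoodP_pos h0 hg
      have hapos : 0 < condM_NZ p m n z := div_pos hq hnz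
      have hcond1 := hg.1.1
      rw [div_le_iff₀ hapos] at hcond1
      calc ((e:ℕ):ℝ)+1 ≤ (K:ℝ)*condMX p x m := hec
      _ ≤ (K:ℝ)*(δ*(2:ℝ)^R₁*condM_NZ p m n z) :=
          mul_le_mul_of_nonneg_left (le_of_le_of_eq hcond1 (by ring)) (Nat.cast_nonneg K)
  calc ∑ m, ∑ e : Fin K, (if PredP p K δ R₁ R₂ L m n e f z then (1:ℝ) else 0)
      ≤ ∑ m, (K:ℝ)*(δ*(2:ℝ)^R₁*condM_NZ p m n z) := Finset.sum_le_sum fun m _ => hstep m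
  _ = (K:ℝ)*(δ*(2:ℝ)^R₁) * ∑ m, condM_NZ p m n z := by
      rw [Finset.mul_sum]
      exact Finset.sum_congr rfl fun m _ => by ring
  _ ≤ (K:ℝ)*(δ*(2:ℝ)^R₁) * 1 := by
      apply mul_le_mul_of_nonneg_left (sum_condM_NZ_le_one n z) (by positivity)
  _ = (K:ℝ)*(δ*(2:ℝ)^R₁) := mul_one _


/-- fiber bound over `(m, n, e, f)` for fixed `z` with `margZ p z > 0` -/
lemma fiberMN (h0 : ∀ x y z m n, 0 ≤ p x y z m n) {K : ℕ} (hK : 0 < K) {δ R₁ R₂ L : ℝ}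
    (hδ0 : 0 < δ) (hδ1 : δ ≤ 1) (hL2 : 2 ≤ L) (z : 𝒵) (hz : 0 < margZ p z) :
    ∑ m, ∑ n, ∑ e : Fin K, ∑ f : Fin K,
        (if PredP p K δ R₁ R₂ L m n e f z then (1:ℝ) else 0)
      ≤ (K:ℝ)^2*(δ^4*(2:ℝ)^(R₁+R₂ - Real.logb 2 L))
          *(2 + Real.log (L/δ^2) + Real.log (Fintype.card ℳ)) := by
  have hL0 : (0:ℝ) < L := by linarith
  have hK0 : (0:ℝ) < (K:ℝ) := by exact_mod_cast hK
  have h2R1 : (0:ℝ) < (2:ℝ)^R₁ := Real.rpow_pos_of_pos two_pos R₁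
  have h2R2 : (0:ℝ) < (2:ℝ)^R₂ := Real.rpow_pos_of_pos two_pos R₂
  have hApow : (0:ℝ) < (2:ℝ)^(R₁+R₂ - Real.logb 2 L) :=
    Real.rpow_pos_of_pos two_pos _
  have hAeq : (2:ℝ)^(R₁+R₂ - Real.logb 2 L) = (2:ℝ)^R₁*(2:ℝ)^R₂/L := by
    rw [Real.rpow_sub two_pos, Real.rpow_add two_pos, Real.rpow_logb two_pos (by norm_num) hL0]
  set P : ℳ → ℝ := fun m => margMZ p m z / margZ p z with hPdef
  have hP0 : ∀ m, 0 ≤ P m := fun m => div_nonneg (margMZ_nonneg h0 m z) (margZ_nonneg h0 z)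
  have hP1 : ∑ m, P m = 1 := by
    simp only [hPdef]
    rw [← Finset.sum_div, ← margZ_eqMZ, div_self (ne_of_gt hz)]
  have hlog0 : (0:ℝ) ≤ Real.log (L/δ^2) := by
    apply Real.log_nonneg
    rw [le_div_iff₀ (by positivity)]
    nlinarith
  set Aδ : ℝ := δ^4*(2:ℝ)^(R₁+R₂ - Real.logb 2 L) with hAδdef
  have hAδ0 : 0 < Aδ := by positivity
  have hmn : ∀ (m : ℳ) (n : 𝒩), ∑ e : Fin K, ∑ f : Fin K,
      (if PredP p K δ R₁ R₂ L m n e f z then (1:ℝ) else 0)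
      ≤ (K:ℝ)^2*(Aδ*condMN_Z p m n z)
          *(2 + Real.log (L/δ^2) + _root_.posLog (1/(P m))) := by
    intro m n
    by_cases hq : 0 < margMNZ p m n z
    · have hmz : 0 < margMZ p m z := lt_of_lt_of_le hq (margMNZ_le_margMZ h0 m n z)
      have hnz : 0 < margNZ p n z := lt_of_lt_of_le hq (margMNZ_le_margNZ h0 m n z)
      have ha : 0 < condM_NZ p m n z := div_pos hq hnz
      have hb : 0 < condN_MZ p n m z := div_pos hq hmz
      have hc : 0 < condMN_Z p m n z := div_pos hq hz
      have hPm : 0 < P m := div_pos hmz hz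
      set W : ℝ := (K:ℝ)*(δ*(2:ℝ)^R₁*condM_NZ p m n z) with hWdef
      set H : ℝ := (K:ℝ)*(δ*(2:ℝ)^R₂*condN_MZ p n m z) with hHdef
      set C : ℝ := (K:ℝ)^2*(Aδ*condMN_Z p m n z) with hCdef
      have hH : 0 < H := by
        rw [hHdef]
        exact mul_pos hK0 (mul_pos (mul_pos hδ0 h2R2) hb)
      have hC : 0 < C := by
        rw [hCdef]
        exact mul_pos (by positivity) (mul_pos hAδ0 hc)
      have hwit : ∀ e f : Fin K, PredP p K δ R₁ R₂ L m n e f z →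
          (((e:ℕ):ℝ)+1 ≤ W ∧ ((f:ℕ):ℝ)+1 ≤ H ∧ (((e:ℕ):ℝ)+1)*(((f:ℕ):ℝ)+1) ≤ C) := by
        intro e f hpred
        obtain ⟨x, y, hg, hec, hfc⟩ := hpred
        have ha' := hg.1.1
        rw [div_le_iff₀ ha] at ha'
        have hb' := hg.1.2.1
        rw [div_le_iff₀ hb] at hb'
        have hc' := hg.1.2.2
        rw [div_le_iff₀ hc] at hc'
        have hcm : 0 ≤ condMX p x m := condMX_nonneg h0 x m
        have hcn : 0 ≤ condNY p y n := condNY_nonneg h0 y n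
        refine ⟨?_, ?_, ?_⟩
        · calc ((e:ℕ):ℝ)+1 ≤ (K:ℝ)*condMX p x m := hec
          _ ≤ W := by
              rw [hWdef]
              exact mul_le_mul_of_nonneg_left (le_of_le_of_eq ha' (by ring)) hK0.le
        · calc ((f:ℕ):ℝ)+1 ≤ (K:ℝ)*condNY p y n := hfc
          _ ≤ H := by
              rw [hHdef]
              exact mul_le_mul_of_nonneg_left (le_of_le_of_eq hb' (by ring)) hK0.le
        · calc (((e:ℕ):ℝ)+1)*(((f:ℕ):ℝ)+1)
              ≤ ((K:ℝ)*condMX p x m)*((K:ℝ)*condNY p y n) := by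
                apply mul_le_mul hec hfc (by positivity) (by positivity)
          _ = (K:ℝ)^2*(condMX p x m * condNY p y n) := by ring
          _ ≤ (K:ℝ)^2*((δ^4*(2:ℝ)^(R₁+R₂ - Real.logb 2 L))*condMN_Z p m n z) := by
              apply mul_le_mul_of_nonneg_left (le_of_le_of_eq hc' (by ring)) (by positivity)
          _ = C := by rw [hCdef, hAδdef]
      have happ := count_hyper (fun e f => PredP p K δ R₁ R₂ L m n e f z) W H C hH hC hwit
      have hab : condM_NZ p m n z * condN_MZ p n m z / condMN_Z p m n z ≤ 1/(P m) := by
        have hq' : margMNZ p m n z ≤ margNZ p n z := margMNZ_le_margNZ h0 m n z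
        have he1 : condM_NZ p m n z * condN_MZ p n m z / condMN_Z p m n z
            = margMNZ p m n z * margZ p z / (margNZ p n z * margMZ p m z) := by
          rw [condM_NZ, condN_MZ, condMN_Z]
          field_simp
        have he2 : 1/(P m) = margZ p z / margMZ p m z := by
          rw [hPdef]
          simp only [one_div_div]
        rw [he1, he2, div_le_div_iff₀ (by positivity) hmz]
        calc margMNZ p m n z * margZ p z * margMZ p m z
            = margMNZ p m n z * (margZ p z * margMZ p m z) := by ring
        _ ≤ margNZ p n z * (margZ p z * margMZ p m z) :=
            mul_le_mul_of_nonneg_right hq' (mul_pos hz hmz).le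
        _ = margZ p z * (margNZ p n z * margMZ p m z) := by ring
      have hWHC : W*H/C = (L/δ^2)*(condM_NZ p m n z * condN_MZ p n m z / condMN_Z p m n z) := by
        rw [hWdef, hHdef, hCdef, hAδdef, hAeq]
        field_simp
      have hpl : _root_.posLog (W*H/C) ≤ Real.log (L/δ^2) + _root_.posLog (1/(P m)) := by
        have h1 : W*H/C ≤ (L/δ^2)*(1/(P m)) := by
          rw [hWHC]
          exact mul_le_mul_of_nonneg_left hab (by positivity)
        have h2 : (1:ℝ) ≤ L/δ^2 := by
          rw [le_div_iff₀ (by positivity)]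
          nlinarith
        exact (posLog_mono h1).trans (posLog_mul_le h2)
      calc ∑ e : Fin K, ∑ f : Fin K, (if PredP p K δ R₁ R₂ L m n e f z then (1:ℝ) else 0)
          ≤ C*(2 + _root_.posLog (W*H/C)) := happ
      _ ≤ C*(2 + (Real.log (L/δ^2) + _root_.posLog (1/(P m)))) :=
          mul_le_mul_of_nonneg_left (by linarith) hC.le
      _ = C*(2 + Real.log (L/δ^2) + _root_.posLog (1/(P m))) := by ring
    · have hq0 : margMNZ p m n z = 0 := le_antisymm (not_lt.mp hq) (margMNZ_nonneg h0 m n z)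
      have hc0 : condMN_Z p m n z = 0 := by rw [condMN_Z, hq0, zero_div]
      have hsum0 : ∑ e : Fin K, ∑ f : Fin K,
          (if PredP p K δ R₁ R₂ L m n e f z then (1:ℝ) else 0) = 0 := by
        refine Finset.sum_eq_zero fun e _ => Finset.sum_eq_zero fun f _ => ?_
        rw [if_neg]
        rintro ⟨x, y, hg, -, -⟩
        exact hq (GoodP_pos h0 hg).1
      rw [hsum0, hc0]
      simp
  calc ∑ m, ∑ n, ∑ e : Fin K, ∑ f : Fin K,
      (if PredP p K δ R₁ R₂ L m n e f z then (1:ℝ) else 0)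
      ≤ ∑ m, ∑ n, (K:ℝ)^2*(Aδ*condMN_Z p m n z)
          *(2 + Real.log (L/δ^2) + _root_.posLog (1/(P m))) :=
        Finset.sum_le_sum fun m _ => Finset.sum_le_sum fun n _ => hmn m n
  _ = ∑ m, ((K:ℝ)^2*Aδ*(2 + Real.log (L/δ^2) + _root_.posLog (1/(P m)))) * ∑ n, condMN_Z p m n z := by
      refine Finset.sum_congr rfl fun m _ => ?_
      rw [Finset.mul_sum]
      exact Finset.sum_congr rfl fun n _ => by ring
  _ = ∑ m, ((K:ℝ)^2*Aδ*(2 + Real.log (L/δ^2) + _root_.posLog (1/(P m)))) * P m := by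
      refine Finset.sum_congr rfl fun m _ => ?_
      rw [sum_condMN_Z_n]
  _ = (K:ℝ)^2*Aδ * ∑ m, ((2 + Real.log (L/δ^2)) * P m + P m * _root_.posLog (1/(P m))) := by
      rw [Finset.mul_sum]
      exact Finset.sum_congr rfl fun m _ => by ring
  _ ≤ (K:ℝ)^2*Aδ * (2 + Real.log (L/δ^2) + Real.log (Fintype.card ℳ)) := by
      apply mul_le_mul_of_nonneg_left _ (by positivity)
      rw [Finset.sum_add_distrib, ← Finset.mul_sum, hP1, mul_one]
      have hent := sum_mul_posLog_inv_le P hP0 hP1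
      linarith
  _ = (K:ℝ)^2*(δ^4*(2:ℝ)^(R₁+R₂ - Real.logb 2 L))
      *(2 + Real.log (L/δ^2) + Real.log (Fintype.card ℳ)) := by
      rw [hAδdef]

end Pred


lemma alg4 (Mr Nr Kr T Lr d B : ℝ) (hM : Mr ≠ 0) (hN : Nr ≠ 0) (hK : Kr ≠ 0) :
    (1/(Mr*Kr))*(1/(Nr*Kr))*(Kr^2*(d*(T/Lr))*B) = (d*B)*(T/Lr)/(Mr*Nr) := by
  generalize T/Lr = u
  field_simp

lemma alg5 (d Lr T : ℝ) (hL : Lr ≠ 0) : (d*Lr)*(T/Lr) = d*T := by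
  field_simp

/-- Lemma 3.3: existence of the hypothesis-testing set `𝒜`.  Here `S`
is the uniform distribution on `ℳ × [K]` (mass `1/(|ℳ|·K)`) and `T` the uniform
distribution on `𝒩 × [K]` (mass `1/(|𝒩|·K)`). -/
theorem exists_hypothesis_testing_set
    (p : 𝒳 → 𝒴 → 𝒵 → ℳ → 𝒩 → ℝ) (hdist : IsDist p) (hMarkov : MarkovCond p)
    (ε δ : ℝ) (hε0 : 0 < ε) (hε1 : ε < 1) (hδ0 : 0 < δ) (hδ1 : δ < 1)
    (hδint : ∃ k : ℕ, 1 < k ∧ (k : ℝ) = 1 / Real.sqrt δ)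
    (R₁ R₂ : ℝ)
    (hPr : 1 - ε ≤ ∑ x, ∑ y, ∑ z, ∑ m, ∑ n,
        (if condMX p x m / condM_NZ p m n z ≤ δ * (2 : ℝ) ^ R₁ ∧
            condNY p y n / condN_MZ p n m z ≤ δ * (2 : ℝ) ^ R₂ ∧
            condMX p x m * condNY p y n / condMN_Z p m n z ≤
              δ ^ 4 * (2 : ℝ) ^ (R₁ + R₂ -
                logb 2 (logb 2 ((max (Fintype.card ℳ) (Fintype.card 𝒩) : ℝ) / δ)))
          then p x y z m n else 0))
    (K : ℕ) (hK : 0 < K)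
    (hKM : ∀ x m, 0 < margX p x → ∃ j : ℕ, 0 < j ∧ (j : ℝ) = (K : ℝ) * condMX p x m)
    (hKN : ∀ y n, 0 < margY p y → ∃ j : ℕ, 0 < j ∧ (j : ℝ) = (K : ℝ) * condNY p y n) :
    ∃ 𝒜 : Finset (ℳ × 𝒩 × Fin K × Fin K × 𝒵),
      (1 - ε - 5 * δ ≤
        ∑ t ∈ 𝒜, extMNEFZ p K t.1 t.2.1 t.2.2.1 t.2.2.2.1 t.2.2.2.2) ∧
      ((∑ t ∈ 𝒜, extMEZ p K t.1 t.2.2.1 t.2.2.2.2 *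
          (1 / ((Fintype.card 𝒩 : ℝ) * (K : ℝ)))) ≤
        δ * (2 : ℝ) ^ R₂ / (Fintype.card 𝒩 : ℝ)) ∧
      ((∑ t ∈ 𝒜, (1 / ((Fintype.card ℳ : ℝ) * (K : ℝ))) *
          extNFZ p K t.2.1 t.2.2.2.1 t.2.2.2.2) ≤
        δ * (2 : ℝ) ^ R₁ / (Fintype.card ℳ : ℝ)) ∧
      ((∑ t ∈ 𝒜, (1 / ((Fintype.card ℳ : ℝ) * (K : ℝ))) *
          (1 / ((Fintype.card 𝒩 : ℝ) * (K : ℝ))) * margZ p t.2.2.2.2) ≤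
        δ * (2 : ℝ) ^ (R₁ + R₂) / ((Fintype.card ℳ : ℝ) * (Fintype.card 𝒩 : ℝ))) := by
  have h0 : ∀ x y z m n, 0 ≤ p x y z m n := hdist.1
  have hK0 : (0:ℝ) < (K:ℝ) := by exact_mod_cast hK
  have h2R1 : (0:ℝ) < (2:ℝ)^R₁ := Real.rpow_pos_of_pos two_pos R₁
  have h2R2 : (0:ℝ) < (2:ℝ)^R₂ := Real.rpow_pos_of_pos two_pos R₂
  have hcM : 0 < Fintype.card ℳ := by
    rcases isEmpty_or_nonempty ℳ with hM | hM
    · exfalso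
      have h1 := hdist.2
      simp only [Finset.univ_eq_empty, Finset.sum_empty, Finset.sum_const_zero] at h1
      norm_num at h1
    · exact Fintype.card_pos
  have hcN : 0 < Fintype.card 𝒩 := by
    rcases isEmpty_or_nonempty 𝒩 with hN | hN
    · exfalso
      have h1 := hdist.2
      simp only [Finset.univ_eq_empty, Finset.sum_empty, Finset.sum_const_zero] at h1
      norm_num at h1
    · exact Fintype.card_pos
  have hMr : (0:ℝ) < (Fintype.card ℳ : ℝ) := by exact_mod_cast hcM
  have hNr : (0:ℝ) < (Fintype.card 𝒩 : ℝ) := by exact_mod_cast hcN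
  obtain ⟨k, hk1, hkδ⟩ := hδint
  have hδ14 : δ ≤ 1/4 := by
    have hsp : 0 < Real.sqrt δ := Real.sqrt_pos.mpr hδ0
    have hk2 : (2:ℝ) ≤ (k:ℝ) := by exact_mod_cast hk1
    have h1 : 2 ≤ 1/Real.sqrt δ := by rw [← hkδ]; exact hk2
    have h2 : Real.sqrt δ ≤ 1/2 := by
      rw [le_div_iff₀ hsp] at h1; linarith
    have h3 : Real.sqrt δ ^ 2 = δ := Real.sq_sqrt hδ0.le
    nlinarith
  set Mc := max ((Fintype.card ℳ : ℝ)) ((Fintype.card 𝒩 : ℝ)) with hMcdef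
  set L := Real.logb 2 (Mc/δ) with hLdef
  have hMc1 : (1:ℝ) ≤ Mc :=
    le_trans (by exact_mod_cast hcM : (1:ℝ) ≤ (Fintype.card ℳ : ℝ)) (le_max_left _ _)
  have hMc0 : (0:ℝ) < Mc := lt_of_lt_of_le one_pos hMc1
  have hL2 : (2:ℝ) ≤ L := by
    rw [hLdef, Real.le_logb_iff_rpow_le one_lt_two (by positivity)]
    have h4 : (4:ℝ) ≤ 1/δ := by rw [le_div_iff₀ hδ0]; linarith
    have h5 : (1:ℝ)/δ ≤ Mc/δ := div_le_div_of_nonneg_right hMc1 hδ0.le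
    have h6 : (2:ℝ)^(2:ℝ) = 4 := by
      rw [show (2:ℝ) = ((2:ℕ):ℝ) from by norm_num, Real.rpow_natCast]
      norm_num
    rw [h6]
    linarith
  have hL0 : (0:ℝ) < L := by linarith
  have hlogMc : Real.log (Mc/δ) = L * Real.log 2 := by
    rw [hLdef, Real.logb]
    field_simp
  have hrepr : ∀ F : ℳ × 𝒩 × Fin K × Fin K × 𝒵 → ℝ,
      (∑ t ∈ Finset.univ.filter (fun t : ℳ × 𝒩 × Fin K × Fin K × 𝒵 =>
        PredP p K δ R₁ R₂ L t.1 t.2.1 t.2.2.1 t.2.2.2.1 t.2.2.2.2), F t)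
      = ∑ m, ∑ n, ∑ e : Fin K, ∑ f : Fin K, ∑ z,
          (if PredP p K δ R₁ R₂ L m n e f z then F (m, n, e, f, z) else 0) := by
    intro F
    rw [Finset.sum_filter, Fintype.sum_prod_type]
    refine Finset.sum_congr rfl fun m _ => ?_
    rw [Fintype.sum_prod_type]
    refine Finset.sum_congr rfl fun n _ => ?_
    rw [Fintype.sum_prod_type]
    refine Finset.sum_congr rfl fun e _ => ?_
    rw [Fintype.sum_prod_type]
  refine ⟨Finset.univ.filter (fun t : ℳ × 𝒩 × Fin K × Fin K × 𝒵 =>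
    PredP p K δ R₁ R₂ L t.1 t.2.1 t.2.2.1 t.2.2.2.1 t.2.2.2.2), ?_, ?_, ?_, ?_⟩
  · -- (i)
    have hmono : 1 - ε - 5*δ ≤ 1 - ε := by linarith
    have hPr' : 1 - ε ≤ ∑ x, ∑ y, ∑ z, ∑ m, ∑ n,
        (if GoodP p δ R₁ R₂ L x y z m n then p x y z m n else 0) := by
      refine le_trans hPr (le_of_eq ?_)
      refine Finset.sum_congr rfl fun x _ => Finset.sum_congr rfl fun y _ =>
        Finset.sum_congr rfl fun z _ => Finset.sum_congr rfl fun m _ =>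
        Finset.sum_congr rfl fun n _ => ?_
      rcases eq_or_lt_of_le (h0 x y z m n) with hp | hp
      · rw [← hp]
        simp only [ite_self]
      · exact if_congr (Iff.intro (fun h => ⟨h, hp⟩) (fun h => h.1)) rfl rfl
    refine le_trans hmono (le_trans hPr' ?_)
    calc ∑ x, ∑ y, ∑ z, ∑ m, ∑ n,
        (if GoodP p δ R₁ R₂ L x y z m n then p x y z m n else 0)
        = ∑ x, ∑ y, ∑ z, ∑ m, ∑ n, ∑ e : Fin K, ∑ f : Fin K,
            (if GoodP p δ R₁ R₂ L x y z m n then extEF p K x y z m n e f else 0) := by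
          refine Finset.sum_congr rfl fun x _ => Finset.sum_congr rfl fun y _ =>
            Finset.sum_congr rfl fun z _ => Finset.sum_congr rfl fun m _ =>
            Finset.sum_congr rfl fun n _ => ?_
          by_cases hg : GoodP p δ R₁ R₂ L x y z m n
          · rw [if_pos hg]
            have he : ∑ e : Fin K, ∑ f : Fin K,
                (if GoodP p δ R₁ R₂ L x y z m n then extEF p K x y z m n e f else 0)
                = ∑ e : Fin K, ∑ f : Fin K, extEF p K x y z m n e f :=
              Finset.sum_congr rfl fun e _ => Finset.sum_congr rfl fun f _ => if_pos hg
            rw [he, inner_ef_eq h0 K x y z m n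
              (hKM x m (GoodP_pos h0 hg).2.2.2.2.1) (hKN y n (GoodP_pos h0 hg).2.2.2.2.2)]
          · rw [if_neg hg, eq_comm]
            exact Finset.sum_eq_zero fun e _ => Finset.sum_eq_zero fun f _ => if_neg hg
    _ = ∑ m, ∑ n, ∑ e : Fin K, ∑ f : Fin K, ∑ z, ∑ x, ∑ y,
          (if GoodP p δ R₁ R₂ L x y z m n then extEF p K x y z m n e f else 0) :=
        (permC (fun m n e f z x y =>
          if GoodP p δ R₁ R₂ L x y z m n then extEF p K x y z m n e f else 0)).symm
    _ ≤ ∑ m, ∑ n, ∑ e : Fin K, ∑ f : Fin K, ∑ z,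
          (if PredP p K δ R₁ R₂ L m n e f z then extMNEFZ p K m n e f z else 0) := by
        refine Finset.sum_le_sum fun m _ => Finset.sum_le_sum fun n _ =>
          Finset.sum_le_sum fun e _ => Finset.sum_le_sum fun f _ =>
          Finset.sum_le_sum fun z _ => ?_
        by_cases hpred : PredP p K δ R₁ R₂ L m n e f z
        · rw [if_pos hpred]
          calc ∑ x, ∑ y, (if GoodP p δ R₁ R₂ L x y z m n then extEF p K x y z m n e f else 0)
              ≤ ∑ x, ∑ y, extEF p K x y z m n e f := by
                refine Finset.sum_le_sum fun x _ => Finset.sum_le_sum fun y _ => ?_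
                split
                · exact le_rfl
                · exact extEF_nonneg h0 K x y z m n e f
          _ = extMNEFZ p K m n e f z := rfl
        · rw [if_neg hpred]
          apply le_of_eq
          refine Finset.sum_eq_zero fun x _ => Finset.sum_eq_zero fun y _ => ?_
          by_cases hg : GoodP p δ R₁ R₂ L x y z m n
          · rw [if_pos hg]
            by_cases hec : ((e:ℕ):ℝ)+1 ≤ (K:ℝ)*condMX p x m
            · by_cases hfc : ((f:ℕ):ℝ)+1 ≤ (K:ℝ)*condNY p y n
              · exact absurd ⟨x, y, hg, hec, hfc⟩ hpred
              · unfold extEF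
                rw [if_neg hfc]
                ring
            · unfold extEF
              rw [if_neg hec]
              ring
          · rw [if_neg hg]
    _ = ∑ t ∈ Finset.univ.filter (fun t : ℳ × 𝒩 × Fin K × Fin K × 𝒵 =>
          PredP p K δ R₁ R₂ L t.1 t.2.1 t.2.2.1 t.2.2.2.1 t.2.2.2.2),
          extMNEFZ p K t.1 t.2.1 t.2.2.1 t.2.2.2.1 t.2.2.2.2 :=
        (hrepr (fun t => extMNEFZ p K t.1 t.2.1 t.2.2.1 t.2.2.2.1 t.2.2.2.2)).symm
  · -- (ii)
    calc ∑ t ∈ Finset.univ.filter (fun t : ℳ × 𝒩 × Fin K × Fin K × 𝒵 =>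
          PredP p K δ R₁ R₂ L t.1 t.2.1 t.2.2.1 t.2.2.2.1 t.2.2.2.2),
        extMEZ p K t.1 t.2.2.1 t.2.2.2.2 * (1 / ((Fintype.card 𝒩 : ℝ) * (K : ℝ)))
        = ∑ m, ∑ n, ∑ e : Fin K, ∑ f : Fin K, ∑ z,
            (if PredP p K δ R₁ R₂ L m n e f z
              then extMEZ p K m e z * (1 / ((Fintype.card 𝒩 : ℝ) * (K : ℝ))) else 0) :=
        hrepr (fun t => extMEZ p K t.1 t.2.2.1 t.2.2.2.2 * (1 / ((Fintype.card 𝒩 : ℝ) * (K : ℝ))))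
    _ = ∑ m, ∑ e : Fin K, ∑ z, ∑ n, ∑ f : Fin K,
            (if PredP p K δ R₁ R₂ L m n e f z
              then extMEZ p K m e z * (1 / ((Fintype.card 𝒩 : ℝ) * (K : ℝ))) else 0) :=
        permD (fun m n e f z => if PredP p K δ R₁ R₂ L m n e f z
              then extMEZ p K m e z * (1 / ((Fintype.card 𝒩 : ℝ) * (K : ℝ))) else 0)
    _ ≤ ∑ m, ∑ e : Fin K, ∑ z,
          extMEZ p K m e z * (1 / ((Fintype.card 𝒩 : ℝ) * (K : ℝ))) * ((K:ℝ)*(δ*(2:ℝ)^R₂)) := by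
        refine Finset.sum_le_sum fun m _ => Finset.sum_le_sum fun e _ =>
          Finset.sum_le_sum fun z _ => ?_
        have hA0 : 0 ≤ extMEZ p K m e z * (1 / ((Fintype.card 𝒩:ℝ) * (K:ℝ))) :=
          mul_nonneg (extMEZ_nonneg h0 K m e z) (by positivity)
        have heq : ∑ n, ∑ f : Fin K, (if PredP p K δ R₁ R₂ L m n e f z
              then extMEZ p K m e z * (1/((Fintype.card 𝒩:ℝ)*(K:ℝ))) else 0)
            = extMEZ p K m e z * (1/((Fintype.card 𝒩:ℝ)*(K:ℝ)))
                * ∑ n, ∑ f : Fin K, (if PredP p K δ R₁ R₂ L m n e f z then (1:ℝ) else 0) := by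
          rw [Finset.mul_sum]
          refine Finset.sum_congr rfl fun n _ => ?_
          rw [Finset.mul_sum]
          refine Finset.sum_congr rfl fun f _ => ?_
          split <;> ring
        rw [heq]
        exact mul_le_mul_of_nonneg_left (fiberN h0 hδ0 m e z) hA0
    _ = ∑ m, ∑ e : Fin K, ∑ z, extMEZ p K m e z
          * ((1 / ((Fintype.card 𝒩 : ℝ) * (K : ℝ))) * ((K:ℝ)*(δ*(2:ℝ)^R₂))) := by
        refine Finset.sum_congr rfl fun m _ => Finset.sum_congr rfl fun e _ =>
          Finset.sum_congr rfl fun z _ => by ring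
    _ = (∑ m, ∑ e : Fin K, ∑ z, extMEZ p K m e z)
          * ((1 / ((Fintype.card 𝒩 : ℝ) * (K : ℝ))) * ((K:ℝ)*(δ*(2:ℝ)^R₂))) := by
        simp only [← Finset.sum_mul]
    _ ≤ 1 * ((1 / ((Fintype.card 𝒩 : ℝ) * (K : ℝ))) * ((K:ℝ)*(δ*(2:ℝ)^R₂))) :=
        mul_le_mul_of_nonneg_right (totMEZ h0 hdist K) (by positivity)
    _ = δ * (2:ℝ)^R₂ / (Fintype.card 𝒩 : ℝ) := by
        rw [one_mul]
        field_simp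
  · -- (iii)
    calc ∑ t ∈ Finset.univ.filter (fun t : ℳ × 𝒩 × Fin K × Fin K × 𝒵 =>
          PredP p K δ R₁ R₂ L t.1 t.2.1 t.2.2.1 t.2.2.2.1 t.2.2.2.2),
        (1 / ((Fintype.card ℳ : ℝ) * (K : ℝ))) * extNFZ p K t.2.1 t.2.2.2.1 t.2.2.2.2
        = ∑ m, ∑ n, ∑ e : Fin K, ∑ f : Fin K, ∑ z,
            (if PredP p K δ R₁ R₂ L m n e f z
              then (1 / ((Fintype.card ℳ : ℝ) * (K : ℝ))) * extNFZ p K n f z else 0) :=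
        hrepr (fun t => (1 / ((Fintype.card ℳ : ℝ) * (K : ℝ))) * extNFZ p K t.2.1 t.2.2.2.1 t.2.2.2.2)
    _ = ∑ n, ∑ f : Fin K, ∑ z, ∑ m, ∑ e : Fin K,
            (if PredP p K δ R₁ R₂ L m n e f z
              then (1 / ((Fintype.card ℳ : ℝ) * (K : ℝ))) * extNFZ p K n f z else 0) :=
        permE (fun m n e f z => if PredP p K δ R₁ R₂ L m n e f z
              then (1 / ((Fintype.card ℳ : ℝ) * (K : ℝ))) * extNFZ p K n f z else 0)
    _ ≤ ∑ n, ∑ f : Fin K, ∑ z,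
          (1 / ((Fintype.card ℳ : ℝ) * (K : ℝ))) * extNFZ p K n f z * ((K:ℝ)*(δ*(2:ℝ)^R₁)) := by
        refine Finset.sum_le_sum fun n _ => Finset.sum_le_sum fun f _ =>
          Finset.sum_le_sum fun z _ => ?_
        have hA0 : 0 ≤ (1 / ((Fintype.card ℳ:ℝ) * (K:ℝ))) * extNFZ p K n f z :=
          mul_nonneg (by positivity) (extNFZ_nonneg h0 K n f z)
        have heq : ∑ m, ∑ e : Fin K, (if PredP p K δ R₁ R₂ L m n e f z
              then (1/((Fintype.card ℳ:ℝ)*(K:ℝ))) * extNFZ p K n f z else 0)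
            = (1/((Fintype.card ℳ:ℝ)*(K:ℝ))) * extNFZ p K n f z
                * ∑ m, ∑ e : Fin K, (if PredP p K δ R₁ R₂ L m n e f z then (1:ℝ) else 0) := by
          rw [Finset.mul_sum]
          refine Finset.sum_congr rfl fun m _ => ?_
          rw [Finset.mul_sum]
          refine Finset.sum_congr rfl fun e _ => ?_
          split <;> ring
        rw [heq]
        exact mul_le_mul_of_nonneg_left (fiberM h0 hδ0 n f z) hA0
    _ = ∑ n, ∑ f : Fin K, ∑ z, extNFZ p K n f z
          * ((1 / ((Fintype.card ℳ : ℝ) * (K : ℝ))) * ((K:ℝ)*(δ*(2:ℝ)^R₁))) := by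
        refine Finset.sum_congr rfl fun n _ => Finset.sum_congr rfl fun f _ =>
          Finset.sum_congr rfl fun z _ => by ring
    _ = (∑ n, ∑ f : Fin K, ∑ z, extNFZ p K n f z)
          * ((1 / ((Fintype.card ℳ : ℝ) * (K : ℝ))) * ((K:ℝ)*(δ*(2:ℝ)^R₁))) := by
        simp only [← Finset.sum_mul]
    _ ≤ 1 * ((1 / ((Fintype.card ℳ : ℝ) * (K : ℝ))) * ((K:ℝ)*(δ*(2:ℝ)^R₁))) :=
        mul_le_mul_of_nonneg_right (totNFZ h0 hdist K) (by positivity)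
    _ = δ * (2:ℝ)^R₁ / (Fintype.card ℳ : ℝ) := by
        rw [one_mul]
        field_simp
  · -- (iv)
    have hδ1' : δ ≤ 1 := by linarith
    have hT : (0:ℝ) < (2:ℝ)^(R₁+R₂) := Real.rpow_pos_of_pos two_pos _
    have hApow : (0:ℝ) < (2:ℝ)^(R₁+R₂ - Real.logb 2 L) := Real.rpow_pos_of_pos two_pos _
    set B' : ℝ := 2 + Real.log (L/δ^2) + Real.log (Fintype.card ℳ) with hB'def
    have hlogδ : Real.log δ < 0 := Real.log_neg hδ0 hδ1
    have hlogMcpos : 0 ≤ Real.log Mc := Real.log_nonneg hMc1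
    have hlogMc2 : Real.log Mc - Real.log δ = L * Real.log 2 := by
      rw [← Real.log_div (ne_of_gt hMc0) (ne_of_gt hδ0)]
      exact hlogMc
    have hlog2 : Real.log 2 < 0.6931471808 := Real.log_two_lt_d9
    have hlogL : Real.log L ≤ L - 1 := Real.log_le_sub_one_of_pos hL0
    have hlogcard : Real.log (Fintype.card ℳ) ≤ Real.log Mc :=
      Real.log_le_log hMr (le_max_left _ _)
    have hlogcard0 : 0 ≤ Real.log (Fintype.card ℳ) :=
      Real.log_nonneg (by exact_mod_cast hcM)
    have hlogLd : Real.log (L/δ^2) = Real.log L - 2*Real.log δ := by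
      rw [Real.log_div (ne_of_gt hL0) (by positivity), Real.log_pow]
      push_cast; ring
    have hlogLd0 : 0 ≤ Real.log (L/δ^2) := by
      apply Real.log_nonneg
      rw [le_div_iff₀ (by positivity)]
      nlinarith
    have hB4 : B' ≤ 4*L := by
      rw [hB'def, hlogLd]
      have h2' : L*Real.log 2 ≤ L*(0.6931471808) :=
        mul_le_mul_of_nonneg_left hlog2.le (by linarith)
      linarith
    have hB0 : 0 ≤ B' := by
      rw [hB'def]; linarith
    have hδ3 : δ^3 ≤ (1/4)^3 := pow_le_pow_left₀ hδ0.le hδ14 3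
    have hkey : δ^4*B' ≤ δ*L := by
      calc δ^4*B' ≤ δ^4*(4*L) := mul_le_mul_of_nonneg_left hB4 (by positivity)
      _ = (4*δ^3)*(δ*L) := by ring
      _ ≤ 1*(δ*L) := by
          have h64 : ((1:ℝ)/4)^3 = 1/64 := by norm_num
          have h4d : 4*δ^3 ≤ (1:ℝ) := by linarith
          have hdL : (0:ℝ) ≤ δ*L := by positivity
          exact mul_le_mul_of_nonneg_right h4d hdL
      _ = δ*L := one_mul _
    have hAeq2 : (2:ℝ)^(R₁+R₂ - Real.logb 2 L) = (2:ℝ)^(R₁+R₂)/L := by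
      rw [Real.rpow_sub two_pos, Real.rpow_logb two_pos (by norm_num) hL0]
    calc ∑ t ∈ Finset.univ.filter (fun t : ℳ × 𝒩 × Fin K × Fin K × 𝒵 =>
          PredP p K δ R₁ R₂ L t.1 t.2.1 t.2.2.1 t.2.2.2.1 t.2.2.2.2),
        (1 / ((Fintype.card ℳ : ℝ) * (K : ℝ))) * (1 / ((Fintype.card 𝒩 : ℝ) * (K : ℝ)))
          * margZ p t.2.2.2.2
        = ∑ m, ∑ n, ∑ e : Fin K, ∑ f : Fin K, ∑ z,
            (if PredP p K δ R₁ R₂ L m n e f z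
              then (1 / ((Fintype.card ℳ : ℝ) * (K : ℝ))) * (1 / ((Fintype.card 𝒩 : ℝ) * (K : ℝ)))
                * margZ p z else 0) :=
        hrepr (fun t => (1 / ((Fintype.card ℳ : ℝ) * (K : ℝ)))
          * (1 / ((Fintype.card 𝒩 : ℝ) * (K : ℝ))) * margZ p t.2.2.2.2)
    _ = ∑ z, ∑ m, ∑ n, ∑ e : Fin K, ∑ f : Fin K,
            (if PredP p K δ R₁ R₂ L m n e f z
              then (1 / ((Fintype.card ℳ : ℝ) * (K : ℝ))) * (1 / ((Fintype.card 𝒩 : ℝ) * (K : ℝ)))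
                * margZ p z else 0) :=
        rot5 (fun m n e f z => if PredP p K δ R₁ R₂ L m n e f z
              then (1 / ((Fintype.card ℳ : ℝ) * (K : ℝ))) * (1 / ((Fintype.card 𝒩 : ℝ) * (K : ℝ)))
                * margZ p z else 0)
    _ ≤ ∑ z, (1 / ((Fintype.card ℳ : ℝ) * (K : ℝ))) * (1 / ((Fintype.card 𝒩 : ℝ) * (K : ℝ)))
          * margZ p z
          * ((K:ℝ)^2*(δ^4*(2:ℝ)^(R₁+R₂ - Real.logb 2 L))*B') := by
        refine Finset.sum_le_sum fun z _ => ?_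
        have heq : ∑ m, ∑ n, ∑ e : Fin K, ∑ f : Fin K,
            (if PredP p K δ R₁ R₂ L m n e f z
              then (1 / ((Fintype.card ℳ : ℝ) * (K : ℝ))) * (1 / ((Fintype.card 𝒩 : ℝ) * (K : ℝ)))
                * margZ p z else 0)
            = (1 / ((Fintype.card ℳ : ℝ) * (K : ℝ))) * (1 / ((Fintype.card 𝒩 : ℝ) * (K : ℝ)))
                * margZ p z
              * ∑ m, ∑ n, ∑ e : Fin K, ∑ f : Fin K,
                (if PredP p K δ R₁ R₂ L m n e f z then (1:ℝ) else 0) := by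
          rw [Finset.mul_sum]
          refine Finset.sum_congr rfl fun m _ => ?_
          rw [Finset.mul_sum]
          refine Finset.sum_congr rfl fun n _ => ?_
          rw [Finset.mul_sum]
          refine Finset.sum_congr rfl fun e _ => ?_
          rw [Finset.mul_sum]
          refine Finset.sum_congr rfl fun f _ => ?_
          split <;> ring
        rw [heq]
        by_cases hz : 0 < margZ p z
        · refine mul_le_mul_of_nonneg_left ?_ ?_
          · exact fiberMN h0 hK hδ0 hδ1' hL2 z hz
          · have := margZ_nonneg h0 z
            positivity
        · have hz0 : margZ p z = 0 := le_antisymm (not_lt.mp hz) (margZ_nonneg h0 z)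
          rw [hz0]
          simp
    _ = ∑ z, margZ p z * ((1 / ((Fintype.card ℳ : ℝ) * (K : ℝ)))
          * (1 / ((Fintype.card 𝒩 : ℝ) * (K : ℝ)))
          * ((K:ℝ)^2*(δ^4*(2:ℝ)^(R₁+R₂ - Real.logb 2 L))*B')) := by
        refine Finset.sum_congr rfl fun z _ => by ring
    _ = (∑ z, margZ p z) * ((1 / ((Fintype.card ℳ : ℝ) * (K : ℝ)))
          * (1 / ((Fintype.card 𝒩 : ℝ) * (K : ℝ)))
          * ((K:ℝ)^2*(δ^4*(2:ℝ)^(R₁+R₂ - Real.logb 2 L))*B')) := by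
        rw [← Finset.sum_mul]
    _ = (1 / ((Fintype.card ℳ : ℝ) * (K : ℝ))) * (1 / ((Fintype.card 𝒩 : ℝ) * (K : ℝ)))
          * ((K:ℝ)^2*(δ^4*(2:ℝ)^(R₁+R₂ - Real.logb 2 L))*B') := by
        rw [sum_margZ hdist, one_mul]
    _ = (δ^4*B')*((2:ℝ)^(R₁+R₂)/L)/((Fintype.card ℳ : ℝ)*(Fintype.card 𝒩 : ℝ)) := by
        rw [hAeq2]
        exact alg4 _ _ _ _ _ _ _ (ne_of_gt hMr) (ne_of_gt hNr) (ne_of_gt hK0)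
    _ ≤ δ * (2:ℝ)^(R₁+R₂) / ((Fintype.card ℳ : ℝ)*(Fintype.card 𝒩 : ℝ)) := by
        apply div_le_div_of_nonneg_right ?_ (by positivity)
        calc (δ^4*B')*((2:ℝ)^(R₁+R₂)/L) ≤ (δ*L)*((2:ℝ)^(R₁+R₂)/L) :=
              mul_le_mul_of_nonneg_right hkey (by positivity)
        _ = δ * (2:ℝ)^(R₁+R₂) := alg5 _ _ _ (ne_of_gt hL0)


end
end

section
/- Let p and q be probability mass functions on a finite set with supp(p) ⊆ supp(q), let k ≥ 0, and suppose the KL divergence D(p‖q) := Σ_ω p(ω)·log(p(ω)/q(ω)) satisfies D(p‖q) ≤ k. Then for every δ ∈ (0,1): Pr_{ω~p}[ p(ω)/q(ω) > 2^{(k+1)/δ} ] ≤ δ. -/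
open Finset Real
open scoped Classical

noncomputable section

/-- The log-sum inequality (natural log version):
`(∑ a) * log ((∑ a)/(∑ b)) ≤ ∑ a i * log (a i / b i)`. -/
lemma log_sum_ineq {α : Type*} (T : Finset α) (a b : α → ℝ)
    (ha : ∀ i ∈ T, 0 ≤ a i) (hb : ∀ i ∈ T, 0 ≤ b i)
    (hab : ∀ i ∈ T, b i = 0 → a i = 0) :
    (∑ i ∈ T, a i) * Real.log ((∑ i ∈ T, a i) / (∑ i ∈ T, b i)) ≤
      ∑ i ∈ T, a i * Real.log (a i / b i) := by
  set B := ∑ i ∈ T, b i with hB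
  rcases eq_or_lt_of_le (Finset.sum_nonneg hb) with h0 | hBpos
  · -- B = 0: all b i = 0, hence all a i = 0
    have hball : ∀ i ∈ T, b i = 0 := by
      intro i hi
      exact le_antisymm (by
        have := (Finset.sum_eq_zero_iff_of_nonneg hb).mp h0.symm
        exact le_of_eq (this i hi)) (hb i hi)
    have haall : ∀ i ∈ T, a i = 0 := fun i hi => hab i hi (hball i hi)
    rw [Finset.sum_eq_zero haall, zero_mul,
      Finset.sum_eq_zero (fun i hi => by rw [haall i hi]; ring)]
  · -- B > 0: Jensen for x ↦ x * log x with weights b i / B at points a i / b i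
    have key := convexOn_mul_log.map_sum_le (t := T) (w := fun i => b i / B)
      (p := fun i => a i / b i)
      (fun i hi => div_nonneg (hb i hi) hBpos.le)
      (by rw [← Finset.sum_div, div_self hBpos.ne'])
      (fun i hi => by
        rcases eq_or_lt_of_le (hb i hi) with h | h
        · simp [← h, hab i hi h.symm]
        · exact div_nonneg (ha i hi) h.le)
    have hsum : (∑ i ∈ T, (b i / B) • (a i / b i)) = (∑ i ∈ T, a i) / B := by
      rw [Finset.sum_div]
      refine Finset.sum_congr rfl fun i hi => ?_
      rcases eq_or_lt_of_le (hb i hi) with h | h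
      · simp [← h, hab i hi h.symm]
      · field_simp
        rw [smul_eq_mul, div_mul_div_comm, mul_comm (b i), mul_div_mul_right _ _ h.ne']
    have hrhs : (∑ i ∈ T, (b i / B) • ((a i / b i) * Real.log (a i / b i))) =
        (∑ i ∈ T, a i * Real.log (a i / b i)) / B := by
      rw [Finset.sum_div]
      refine Finset.sum_congr rfl fun i hi => ?_
      rcases eq_or_lt_of_le (hb i hi) with h | h
      · simp [← h, hab i hi h.symm]
      · have : b i ≠ 0 := h.ne'
        field_simp
        rw [smul_eq_mul, div_mul_div_comm, mul_comm (b i), mul_div_mul_right _ _ this]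
    rw [hsum, hrhs] at key
    have := mul_le_mul_of_nonneg_left key hBpos.le
    calc (∑ i ∈ T, a i) * Real.log ((∑ i ∈ T, a i) / B)
        = B * ((∑ i ∈ T, a i) / B * Real.log ((∑ i ∈ T, a i) / B)) := by
          field_simp
          rw [mul_right_comm, mul_div_cancel_right₀ _ (hBpos.ne' : B ≠ 0)]
      _ ≤ B * ((∑ i ∈ T, a i * Real.log (a i / b i)) / B) := this
      _ = ∑ i ∈ T, a i * Real.log (a i / b i) := by field_simp; exact mul_div_cancel_left₀ _ (hBpos.ne' : B ≠ 0)

/-- The log-sum inequality for `logb 2`. -/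
lemma logb_sum_ineq {α : Type*} (T : Finset α) (a b : α → ℝ)
    (ha : ∀ i ∈ T, 0 ≤ a i) (hb : ∀ i ∈ T, 0 ≤ b i)
    (hab : ∀ i ∈ T, b i = 0 → a i = 0) :
    (∑ i ∈ T, a i) * Real.logb 2 ((∑ i ∈ T, a i) / (∑ i ∈ T, b i)) ≤
      ∑ i ∈ T, a i * Real.logb 2 (a i / b i) := by
  have h2 : (0:ℝ) < Real.log 2 := Real.log_pos one_lt_two
  have := (div_le_div_iff_of_pos_right h2).mpr (log_sum_ineq T a b ha hb hab)
  simp only [Real.logb]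
  calc (∑ i ∈ T, a i) * (Real.log ((∑ i ∈ T, a i) / (∑ i ∈ T, b i)) / Real.log 2)
      = (∑ i ∈ T, a i) * Real.log ((∑ i ∈ T, a i) / (∑ i ∈ T, b i)) / Real.log 2 := by ring
    _ ≤ (∑ i ∈ T, a i * Real.log (a i / b i)) / Real.log 2 := this
    _ = ∑ i ∈ T, a i * (Real.log (a i / b i) / Real.log 2) := by
        rw [Finset.sum_div]; exact Finset.sum_congr rfl fun i _ => by ring

/-- For `0 ≤ x ≤ 1`, `-1 ≤ x * logb 2 x`. -/
lemma neg_one_le_mul_logb {x : ℝ} (h0 : 0 ≤ x) (h1 : x ≤ 1) :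
    -1 ≤ x * Real.logb 2 x := by
  rcases eq_or_lt_of_le h0 with h | hx
  · simp [← h]
  have h2 : (0:ℝ) < Real.log 2 := Real.log_pos one_lt_two
  -- reduce to natural log: -log 2 ≤ x * log x
  have key : -Real.log 2 ≤ x * Real.log x := by
    have hexp : -Real.log x ≤ Real.exp (-Real.log x - 1) := by
      have := Real.add_one_le_exp (-Real.log x - 1)
      linarith
    have hval : Real.exp (-Real.log x - 1) = x⁻¹ * Real.exp (-1) := by
      rw [sub_eq_add_neg, Real.exp_add, Real.exp_neg, Real.exp_log hx]
    rw [hval] at hexp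
    have h3 : x * (-Real.log x) ≤ x * (x⁻¹ * Real.exp (-1)) :=
      mul_le_mul_of_nonneg_left hexp hx.le
    have h4 : x * (x⁻¹ * Real.exp (-1)) = Real.exp (-1) := by field_simp
    rw [h4] at h3
    have h5 : x * (-Real.log x) = -(x * Real.log x) := by ring
    have he : Real.exp (-1) < Real.log 2 := by
      have h1e : Real.exp (-1) < 1/2 := by
        rw [Real.exp_neg]
        rw [inv_lt_comm₀ (Real.exp_pos 1) (by norm_num)]
        have := Real.exp_one_gt_d9
        norm_num at this ⊢
        linarith
      have h2e : (1:ℝ)/2 < Real.log 2 := by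
        have := Real.log_two_gt_d9
        linarith
      linarith
    linarith
  have : -1 ≤ x * Real.log x / Real.log 2 := by
    rw [le_div_iff₀ h2]
    linarith
  simpa [Real.logb, mul_div_assoc] using this

/-- substate-type argument used in Theorem 3.5: if `p, q` are
probability mass functions on a finite set with `supp(p) ⊆ supp(q)` and KL divergence
`D(p‖q) = Σ_ω p(ω) log₂(p(ω)/q(ω)) ≤ k` for some `k ≥ 0`, then for every `δ ∈ (0,1)`,
`Pr_{ω∼p}[ p(ω)/q(ω) > 2^{(k+1)/δ} ] ≤ δ`. -/
theorem kl_divergence_markov_tail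
    {α : Type*} [Fintype α] (p q : α → ℝ)
    (hp0 : ∀ ω, 0 ≤ p ω) (hp1 : (∑ ω, p ω) = 1)
    (hq0 : ∀ ω, 0 ≤ q ω) (hq1 : (∑ ω, q ω) = 1)
    (hsupp : ∀ ω, q ω = 0 → p ω = 0)
    (k : ℝ) (hk : 0 ≤ k)
    (hD : (∑ ω, p ω * logb 2 (p ω / q ω)) ≤ k)
    (δ : ℝ) (hδ0 : 0 < δ) (hδ1 : δ < 1) :
    (∑ ω, if (2 : ℝ) ^ ((k + 1) / δ) < p ω / q ω then p ω else 0) ≤ δ := by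
  set t : ℝ := (k + 1) / δ with htdef
  have ht : 0 < t := div_pos (by linarith) hδ0
  set S : Finset α := Finset.univ.filter (fun ω => (2 : ℝ) ^ t < p ω / q ω) with hS
  have hgoal : (∑ ω, if (2 : ℝ) ^ t < p ω / q ω then p ω else 0) = ∑ ω ∈ S, p ω := by
    rw [hS, Finset.sum_filter]
  rw [hgoal]
  set s : ℝ := ∑ ω ∈ S, p ω with hsdef
  -- split the KL sum
  have hsplit : (∑ ω, p ω * logb 2 (p ω / q ω)) =
      (∑ ω ∈ S, p ω * logb 2 (p ω / q ω)) +
      (∑ ω ∈ Sᶜ, p ω * logb 2 (p ω / q ω)) := by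
    rw [hS, ← Finset.sum_filter_add_sum_filter_not Finset.univ
      (fun ω => (2 : ℝ) ^ t < p ω / q ω)]
    congr 1
    apply Finset.sum_congr _ fun _ _ => rfl
    simp [Finset.compl_filter]
  -- lower bound on the S part
  have hSbound : t * s ≤ ∑ ω ∈ S, p ω * logb 2 (p ω / q ω) := by
    rw [hsdef, Finset.mul_sum]
    refine Finset.sum_le_sum fun ω hω => ?_
    have hmem : (2 : ℝ) ^ t < p ω / q ω := by
      rw [hS] at hω; exact (Finset.mem_filter.mp hω).2
    rcases eq_or_lt_of_le (hp0 ω) with h | h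
    · simp [← h]
    · have hpos : (0:ℝ) < (2 : ℝ) ^ t := Real.rpow_pos_of_pos (by norm_num) t
      have hlogb : t ≤ logb 2 (p ω / q ω) := by
        have := Real.logb_le_logb_of_le (one_lt_two) hpos hmem.le
        rwa [Real.logb_rpow (by norm_num) (by norm_num)] at this
      rw [mul_comm]
      exact mul_le_mul_of_nonneg_left hlogb h.le
  -- lower bound on the complement part
  have hCbound : -1 ≤ ∑ ω ∈ Sᶜ, p ω * logb 2 (p ω / q ω) := by
    set P : ℝ := ∑ ω ∈ Sᶜ, p ω with hP
    set Q : ℝ := ∑ ω ∈ Sᶜ, q ω with hQ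
    have hls := logb_sum_ineq Sᶜ p q (fun ω _ => hp0 ω) (fun ω _ => hq0 ω)
      (fun ω _ h => hsupp ω h)
    have hP0 : 0 ≤ P := Finset.sum_nonneg fun ω _ => hp0 ω
    have hP1 : P ≤ 1 := by
      rw [hP, ← hp1]
      exact Finset.sum_le_sum_of_subset_of_nonneg (Finset.subset_univ _)
        (fun ω _ _ => hp0 ω)
    have hQ1 : Q ≤ 1 := by
      rw [hQ, ← hq1]
      exact Finset.sum_le_sum_of_subset_of_nonneg (Finset.subset_univ _)
        (fun ω _ _ => hq0 ω)
    have hQ0 : 0 ≤ Q := Finset.sum_nonneg fun ω _ => hq0 ω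
    -- P * logb 2 (P/Q) ≥ -1
    have hmain : -1 ≤ P * logb 2 (P / Q) := by
      rcases eq_or_lt_of_le hP0 with h | hPpos
      · simp [← h]
      · have hQpos : 0 < Q := by
          rcases eq_or_lt_of_le hQ0 with h' | h'
          · exfalso
            have : ∀ ω ∈ Sᶜ, q ω = 0 :=
              (Finset.sum_eq_zero_iff_of_nonneg (fun ω _ => hq0 ω)).mp h'.symm
            have hallp : ∀ ω ∈ Sᶜ, p ω = 0 := fun ω hω => hsupp ω (this ω hω)
            rw [hP, Finset.sum_eq_zero hallp] at hPpos
            exact lt_irrefl 0 hPpos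
          · exact h'
        have hdiv : P ≤ P / Q := by
          rw [le_div_iff₀ hQpos]
          nlinarith
        have hlogb : logb 2 P ≤ logb 2 (P / Q) :=
          Real.logb_le_logb_of_le one_lt_two hPpos hdiv
        have := neg_one_le_mul_logb hP0 hP1
        nlinarith [mul_le_mul_of_nonneg_left hlogb hP0]
    calc (-1 : ℝ) ≤ P * logb 2 (P / Q) := hmain
      _ ≤ ∑ ω ∈ Sᶜ, p ω * logb 2 (p ω / q ω) := hls
  -- combine
  have hts : t * s ≤ k + 1 := by
    rw [hsplit] at hD
    linarith
  have htδ : t * δ = k + 1 := by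
    rw [htdef]
    field_simp
  nlinarith
end
end

section
/- Let ε, δ ∈ (0,1) with 1/√δ an integer, let p_{XY} be a joint distribution over finite sets 𝒳×𝒴, and let R₁, R₂ satisfy Pr_{(x,y)~p}[ 1/p_{X|Y=y}(x) ≤ δ·2^{R₁} and 1/p_{Y|X=x}(y) ≤ δ·2^{R₂} and 1/p_{XY}(x,y) ≤ δ⁴·2^{R₁+R₂−log log(max(|𝒳|,|𝒴|)/δ)} ] ≥ 1−ε. Then there exist deterministic encoders f_A : 𝒳 → C_A and f_B : 𝒴 → C_B with |C_A| ≤ 2^{⌈R₁+3 log(1/δ)⌉} and |C_B| ≤ 2^{⌈R₂+3 log(1/δ)⌉}, and a decoder g : C_A×C_B → 𝒳×𝒴, using no shared randomness, such that Pr_{(x,y)~p}[ g(f_A(x), f_B(y)) ≠ (x,y) ] ≤ ε+8δ. -/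
open Finset Real
open scoped Classical

set_option maxHeartbeats 2000000

noncomputable section

variable {𝒳 𝒴 : Type*} [Fintype 𝒳] [Fintype 𝒴]

/-- Marginal on `X` of a joint distribution on `𝒳 × 𝒴`. -/
def margX2 (p : 𝒳 → 𝒴 → ℝ) (x : 𝒳) : ℝ := ∑ y, p x y

/-- Marginal on `Y`. -/
def margY2 (p : 𝒳 → 𝒴 → ℝ) (y : 𝒴) : ℝ := ∑ x, p x y

/-- Conditional `p_{X|Y=y}(x)`. -/
def condXY2 (p : 𝒳 → 𝒴 → ℝ) (x : 𝒳) (y : 𝒴) : ℝ := p x y / margY2 p y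

/-- Conditional `p_{Y|X=x}(y)`. -/
def condYX2 (p : 𝒳 → 𝒴 → ℝ) (y : 𝒴) (x : 𝒳) : ℝ := p x y / margX2 p x

lemma count_collision {α : Type*} [Fintype α] [DecidableEq α] {M : ℕ} {a b : α} (h : a ≠ b) :
    ∑ f : α → Fin M, (if f a = f b then (1:ℝ) else 0)
      = (Fintype.card (α → Fin M) : ℝ) / M := by
  rcases Nat.eq_zero_or_pos M with hM | hM
  · subst hM
    haveI : IsEmpty (α → Fin 0) := ⟨fun f => (f a).elim0⟩
    simp
  rw [← (Equiv.piSplitAt a (fun _ : α => Fin M)).symm.sum_comp, Fintype.sum_prod_type]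
  have key : ∀ v : Fin M, ∀ g : {j // j ≠ a} → Fin M,
      ((Equiv.piSplitAt a (fun _ : α => Fin M)).symm (v, g)) a = v ∧
      ((Equiv.piSplitAt a (fun _ : α => Fin M)).symm (v, g)) b = g ⟨b, h.symm⟩ := by
    intro v g
    constructor
    · simp [Equiv.piSplitAt_symm_apply]
    · simp [Equiv.piSplitAt_symm_apply, h.symm]
  have h1 : ∀ v : Fin M, (∑ g : {j // j ≠ a} → Fin M,
      (if ((Equiv.piSplitAt a (fun _ : α => Fin M)).symm (v, g)) a =
          ((Equiv.piSplitAt a (fun _ : α => Fin M)).symm (v, g)) b then (1:ℝ) else 0))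
      = ∑ g : {j // j ≠ a} → Fin M, (if v = g ⟨b, h.symm⟩ then (1:ℝ) else 0) := by
    intro v
    refine Finset.sum_congr rfl fun g _ => ?_
    rw [(key v g).1, (key v g).2]
  rw [Finset.sum_congr rfl fun v _ => h1 v, Finset.sum_comm]
  have h2 : ∀ g : {j // j ≠ a} → Fin M,
      (∑ v : Fin M, (if v = g ⟨b, h.symm⟩ then (1:ℝ) else 0)) = 1 := by
    intro g; simp
  rw [Finset.sum_congr rfl fun g _ => h2 g, Finset.sum_const]
  have hcard : Fintype.card {j // j ≠ a} = Fintype.card α - 1 := by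
    simp [Fintype.card_subtype_compl]
  have hpos : 1 ≤ Fintype.card α := Fintype.card_pos_iff.mpr ⟨a⟩
  simp only [Finset.card_univ, Fintype.card_fun, Fintype.card_fin, hcard, nsmul_eq_mul, mul_one]
  have hMr : (M:ℝ) ≠ 0 := Nat.cast_ne_zero.mpr hM.ne'
  rw [eq_div_iff hMr]
  norm_cast
  rw [← pow_succ]
  congr 1
  omega

/-- Corollary 5.4, one-shot distributed source coding: under the
stated spectral condition there is a deterministic Slepian–Wolf protocol, with no shared
randomness, with message sets of sizes `2^⌈R₁+3 log(1/δ)⌉` and `2^⌈R₂+3 log(1/δ)⌉`, and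
decoding error at most `ε + 8δ`. -/
theorem one_shot_distributed_source_coding
    (p : 𝒳 → 𝒴 → ℝ) (hp0 : ∀ x y, 0 ≤ p x y) (hp1 : (∑ x, ∑ y, p x y) = 1)
    (ε δ : ℝ) (hε : ε ∈ Set.Ioo (0:ℝ) 1) (hδ : δ ∈ Set.Ioo (0:ℝ) 1)
    (hδint : ∃ j : ℕ, (j : ℝ) = 1 / Real.sqrt δ)
    (R₁ R₂ : ℝ)
    (hPr : 1 - ε ≤ ∑ x, ∑ y,
      (if 1 / condXY2 p x y ≤ δ * (2 : ℝ) ^ R₁ ∧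
          1 / condYX2 p y x ≤ δ * (2 : ℝ) ^ R₂ ∧
          1 / p x y ≤ δ ^ 4 * (2 : ℝ) ^ (R₁ + R₂ -
            logb 2 (logb 2 ((max (Fintype.card 𝒳) (Fintype.card 𝒴) : ℝ) / δ)))
        then p x y else 0)) :
    ∃ (cA cB : ℕ) (fA : 𝒳 → Fin cA) (fB : 𝒴 → Fin cB) (g : Fin cA → Fin cB → 𝒳 × 𝒴),
      ((cA : ℝ) ≤ (2 : ℝ) ^ (⌈R₁ + 3 * logb 2 (1 / δ)⌉ : ℤ)) ∧
      ((cB : ℝ) ≤ (2 : ℝ) ^ (⌈R₂ + 3 * logb 2 (1 / δ)⌉ : ℤ)) ∧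
      (∑ x, ∑ y, (if g (fA x) (fB y) ≠ (x, y) then p x y else 0)) ≤ ε + 8 * δ := by
  obtain ⟨hδ0, hδ1⟩ := hδ
  obtain ⟨hε0, hε1⟩ := hε
  set L : ℝ := logb 2 (logb 2 ((max (Fintype.card 𝒳) (Fintype.card 𝒴) : ℝ) / δ)) with hLdef
  set E : ℝ := R₁ + R₂ - L with hEdef
  set C : 𝒳 × 𝒴 → Prop := fun z =>
    1 / condXY2 p z.1 z.2 ≤ δ * (2 : ℝ) ^ R₁ ∧
    1 / condYX2 p z.2 z.1 ≤ δ * (2 : ℝ) ^ R₂ ∧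
    1 / p z.1 z.2 ≤ δ ^ 4 * (2 : ℝ) ^ E with hCdef
  set G : Finset (𝒳 × 𝒴) := univ.filter (fun z => C z ∧ 0 < p z.1 z.2) with hGdef
  have hδ4 : δ ≤ 1/4 := by
    obtain ⟨j, hj⟩ := hδint
    have hs0 : 0 < Real.sqrt δ := Real.sqrt_pos.mpr hδ0
    have hs1 : Real.sqrt δ < 1 := by
      rw [show (1:ℝ) = Real.sqrt 1 by simp]
      exact Real.sqrt_lt_sqrt (le_of_lt hδ0) hδ1
    have hj1 : (1:ℝ) < (j:ℝ) := by
      rw [hj]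
      rw [lt_div_iff₀ hs0]
      linarith
    have hjn : 1 < j := by exact_mod_cast hj1
    have hj2' : (2:ℝ) ≤ (j:ℝ) := by exact_mod_cast hjn
    have hsd : Real.sqrt δ = 1 / (j:ℝ) := by rw [hj, one_div_one_div]
    have hsle : Real.sqrt δ ≤ 1/2 := by
      rw [hsd]
      rw [div_le_div_iff₀ (by linarith) (by norm_num)]
      linarith
    have := Real.sq_sqrt (le_of_lt hδ0)
    nlinarith [Real.sqrt_nonneg δ]
  have hsum1 : ∑ z : 𝒳 × 𝒴, p z.1 z.2 = 1 := by
    rw [Fintype.sum_prod_type]; exact hp1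
  have key : (∑ x, ∑ y,
      (if 1 / condXY2 p x y ≤ δ * (2 : ℝ) ^ R₁ ∧
          1 / condYX2 p y x ≤ δ * (2 : ℝ) ^ R₂ ∧
          1 / p x y ≤ δ ^ 4 * (2 : ℝ) ^ E
        then p x y else 0)) = ∑ z ∈ G, p z.1 z.2 := by
    have e1 : (∑ z : 𝒳 × 𝒴,
        (if 1 / condXY2 p z.1 z.2 ≤ δ * (2 : ℝ) ^ R₁ ∧
            1 / condYX2 p z.2 z.1 ≤ δ * (2 : ℝ) ^ R₂ ∧
            1 / p z.1 z.2 ≤ δ ^ 4 * (2 : ℝ) ^ E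
          then p z.1 z.2 else 0)) = ∑ x, ∑ y,
      (if 1 / condXY2 p x y ≤ δ * (2 : ℝ) ^ R₁ ∧
          1 / condYX2 p y x ≤ δ * (2 : ℝ) ^ R₂ ∧
          1 / p x y ≤ δ ^ 4 * (2 : ℝ) ^ E
        then p x y else 0) := Fintype.sum_prod_type _
    rw [← e1, hGdef, Finset.sum_filter]
    apply Finset.sum_congr rfl
    intro z _
    simp only [hCdef]
    by_cases hp : 0 < p z.1 z.2
    · simp [hp]
    · have hz0 : p z.1 z.2 = 0 := le_antisymm (not_lt.mp hp) (hp0 _ _)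
      simp [hp, hz0]
  have hGmass : 1 - ε ≤ ∑ z ∈ G, p z.1 z.2 := by
    rw [← key]; exact hPr
  have hGle1 : ∑ z ∈ G, p z.1 z.2 ≤ 1 := by
    rw [← hsum1]
    exact Finset.sum_le_sum_of_subset_of_nonneg (Finset.subset_univ G)
      (fun z _ _ => hp0 z.1 z.2)
  have hGne : G.Nonempty := by
    rw [Finset.nonempty_iff_ne_empty]
    intro h
    rw [h, Finset.sum_empty] at hGmass
    linarith
  obtain ⟨z₀, hz₀⟩ := hGne
  -- basic facts about elements of G
  have hGfact : ∀ z ∈ G, 0 < p z.1 z.2 ∧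
      margY2 p z.2 ≤ δ * (2:ℝ) ^ R₁ * p z.1 z.2 ∧
      margX2 p z.1 ≤ δ * (2:ℝ) ^ R₂ * p z.1 z.2 ∧
      1 ≤ δ ^ 4 * (2:ℝ) ^ E * p z.1 z.2 := by
    intro z hz
    rw [hGdef, Finset.mem_filter, hCdef] at hz
    obtain ⟨-, ⟨c1, c2, c3⟩, hp⟩ := hz
    refine ⟨hp, ?_, ?_, ?_⟩
    · rw [condXY2, one_div_div] at c1
      have hm : 0 < margY2 p z.2 := by
        rw [margY2]
        exact lt_of_lt_of_le hp (Finset.single_le_sum (fun x _ => hp0 x z.2) (Finset.mem_univ z.1))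
      rw [div_le_iff₀ hp] at c1
      linarith
    · rw [condYX2, one_div_div] at c2
      rw [div_le_iff₀ hp] at c2
      linarith
    · rw [div_le_iff₀ hp] at c3
      linarith
  -- 2^{R₁} ≥ 1/δ etc.
  have h2R₁ : 1/δ ≤ (2:ℝ) ^ R₁ := by
    obtain ⟨hp', c1, -, -⟩ := hGfact z₀ hz₀
    have hple : p z₀.1 z₀.2 ≤ margY2 p z₀.2 := by
      rw [margY2]
      exact Finset.single_le_sum (fun x _ => hp0 x z₀.2) (Finset.mem_univ z₀.1)
    have h1 : 1 ≤ δ * (2:ℝ) ^ R₁ := by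
      have := le_trans hple c1
      nlinarith
    rw [div_le_iff₀ hδ0]
    nlinarith
  have h2R₂ : 1/δ ≤ (2:ℝ) ^ R₂ := by
    obtain ⟨hp', -, c2, -⟩ := hGfact z₀ hz₀
    have hple : p z₀.1 z₀.2 ≤ margX2 p z₀.1 := by
      rw [margX2]
      exact Finset.single_le_sum (fun y _ => hp0 z₀.1 y) (Finset.mem_univ z₀.2)
    have h1 : 1 ≤ δ * (2:ℝ) ^ R₂ := by
      have := le_trans hple c2
      nlinarith
    rw [div_le_iff₀ hδ0]
    nlinarith
  have hLpos : 0 ≤ L := by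
    haveI : Nonempty 𝒳 := ⟨z₀.1⟩
    have hcard : (1:ℝ) ≤ (max (Fintype.card 𝒳) (Fintype.card 𝒴) : ℝ) := by
      have : 1 ≤ Fintype.card 𝒳 := Fintype.card_pos
      have h2 : (Fintype.card 𝒳 : ℝ) ≤ (max (Fintype.card 𝒳) (Fintype.card 𝒴) : ℝ) := by
        exact_mod_cast Nat.cast_le.mpr (le_max_left _ _)
      have h3 : (1:ℝ) ≤ (Fintype.card 𝒳 : ℝ) := by exact_mod_cast this
      linarith
    have hq : (2:ℝ) ≤ (max (Fintype.card 𝒳) (Fintype.card 𝒴) : ℝ) / δ := by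
      rw [le_div_iff₀ hδ0]
      nlinarith
    have hinner : 1 ≤ logb 2 ((max (Fintype.card 𝒳) (Fintype.card 𝒴) : ℝ) / δ) := by
      rw [Real.le_logb_iff_rpow_le (by norm_num) (by positivity), Real.rpow_one]
      exact hq
    exact Real.logb_nonneg (by norm_num) hinner
  -- message sizes
  set k₁ : ℕ := (⌈R₁ + 3 * logb 2 (1 / δ)⌉).toNat with hk₁
  set k₂ : ℕ := (⌈R₂ + 3 * logb 2 (1 / δ)⌉).toNat with hk₂
  set cA : ℕ := 2 ^ k₁ with hcA
  set cB : ℕ := 2 ^ k₂ with hcB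
  have hcApos : 0 < cA := Nat.pow_pos (by norm_num)
  have hcBpos : 0 < cB := Nat.pow_pos (by norm_num)
  have hδinv : (1:ℝ) ≤ 1/δ := by
    rw [le_div_iff₀ hδ0]; linarith
  have hlogδ : 0 ≤ logb 2 (1/δ) := Real.logb_nonneg (by norm_num) hδinv
  have hR₁0 : 0 ≤ R₁ := by
    have h1 : (1:ℝ) ≤ (2:ℝ) ^ R₁ := le_trans hδinv h2R₁
    by_contra hneg
    push_neg at hneg
    have : (2:ℝ) ^ R₁ < (2:ℝ) ^ (0:ℝ) :=
      Real.rpow_lt_rpow_left_iff (by norm_num : (1:ℝ) < 2) |>.mpr hneg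
    rw [Real.rpow_zero] at this
    linarith
  have hR₂0 : 0 ≤ R₂ := by
    have h1 : (1:ℝ) ≤ (2:ℝ) ^ R₂ := le_trans hδinv h2R₂
    by_contra hneg
    push_neg at hneg
    have : (2:ℝ) ^ R₂ < (2:ℝ) ^ (0:ℝ) :=
      Real.rpow_lt_rpow_left_iff (by norm_num : (1:ℝ) < 2) |>.mpr hneg
    rw [Real.rpow_zero] at this
    linarith
  have hceil₁ : 0 ≤ ⌈R₁ + 3 * logb 2 (1 / δ)⌉ := Int.ceil_nonneg (by linarith)
  have hceil₂ : 0 ≤ ⌈R₂ + 3 * logb 2 (1 / δ)⌉ := Int.ceil_nonneg (by linarith)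
  have hcAbound : (cA : ℝ) = (2 : ℝ) ^ (⌈R₁ + 3 * logb 2 (1 / δ)⌉ : ℤ) := by
    rw [hcA, hk₁]
    rw [show (⌈R₁ + 3 * logb 2 (1 / δ)⌉ : ℤ) = ((⌈R₁ + 3 * logb 2 (1 / δ)⌉.toNat : ℕ) : ℤ) by
      rw [Int.toNat_of_nonneg hceil₁]]
    rw [zpow_natCast]
    push_cast
    simp
    omega
  have hcBbound : (cB : ℝ) = (2 : ℝ) ^ (⌈R₂ + 3 * logb 2 (1 / δ)⌉ : ℤ) := by
    rw [hcB, hk₂]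
    rw [show (⌈R₂ + 3 * logb 2 (1 / δ)⌉ : ℤ) = ((⌈R₂ + 3 * logb 2 (1 / δ)⌉.toNat : ℕ) : ℤ) by
      rw [Int.toNat_of_nonneg hceil₂]]
    rw [zpow_natCast]
    push_cast
    simp
    omega
  have hrpow_eq : ∀ R : ℝ, (2:ℝ) ^ (R + 3 * logb 2 (1/δ)) = (2:ℝ) ^ R * (1/δ)^3 := by
    intro R
    rw [Real.rpow_add (by norm_num : (0:ℝ) < 2)]
    congr 1
    rw [mul_comm (3:ℝ), Real.rpow_mul (by norm_num : (0:ℝ) ≤ 2),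
      Real.rpow_logb (by norm_num) (by norm_num) (by positivity)]
    rw [show ((3:ℝ)) = ((3:ℕ):ℝ) by norm_num, Real.rpow_natCast]
  have hcAlow : (2:ℝ) ^ R₁ * (1/δ)^3 ≤ (cA : ℝ) := by
    rw [← hrpow_eq R₁, hcAbound]
    rw [show ((2:ℝ) ^ (⌈R₁ + 3 * logb 2 (1 / δ)⌉ : ℤ)) =
        (2:ℝ) ^ ((⌈R₁ + 3 * logb 2 (1 / δ)⌉ : ℤ) : ℝ) by
      rw [Real.rpow_intCast]]
    exact Real.rpow_le_rpow_of_exponent_le (by norm_num) (Int.le_ceil _)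
  have hcBlow : (2:ℝ) ^ R₂ * (1/δ)^3 ≤ (cB : ℝ) := by
    rw [← hrpow_eq R₂, hcBbound]
    rw [show ((2:ℝ) ^ (⌈R₂ + 3 * logb 2 (1 / δ)⌉ : ℤ)) =
        (2:ℝ) ^ ((⌈R₂ + 3 * logb 2 (1 / δ)⌉ : ℤ) : ℝ) by
      rw [Real.rpow_intCast]]
    exact Real.rpow_le_rpow_of_exponent_le (by norm_num) (Int.le_ceil _)
  -- cardinality bounds
  have hD0 : 0 < δ^4 * (2:ℝ)^E := by positivity
  have hNcard : (G.card : ℝ) ≤ δ^4 * (2:ℝ)^E := by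
    have hple : ∀ z ∈ G, (δ^4 * (2:ℝ)^E)⁻¹ ≤ p z.1 z.2 := by
      intro z hz
      obtain ⟨hp', -, -, c3⟩ := hGfact z hz
      rw [inv_le_iff_one_le_mul₀ hD0]
      linarith
    have := Finset.card_nsmul_le_sum G _ _ hple
    rw [nsmul_eq_mul] at this
    have h2 : (G.card:ℝ) * (δ^4 * (2:ℝ)^E)⁻¹ ≤ 1 := le_trans this hGle1
    rw [← div_le_one hD0]
    rw [div_eq_mul_inv]
    exact h2
  have hBcard : ∀ x : 𝒳, ((G.filter fun z => z.1 = x).card : ℝ) ≤ δ * (2:ℝ)^R₂ := by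
    intro x
    rcases (G.filter fun z => z.1 = x).eq_empty_or_nonempty with hS | ⟨w, hw⟩
    · rw [hS]
      simp
      positivity
    · have hwG : w ∈ G := (Finset.mem_filter.mp hw).1
      have hwx : w.1 = x := (Finset.mem_filter.mp hw).2
      have hwp : 0 < p w.1 w.2 := (hGfact w hwG).1
      have hm : 0 < margX2 p x := by
        rw [margX2]
        refine lt_of_lt_of_le ?_ (Finset.single_le_sum (fun y _ => hp0 x y) (Finset.mem_univ w.2))
        rw [← hwx]; exact hwp
      have hD : 0 < δ * (2:ℝ)^R₂ := by positivity
      have hterm : ∀ z ∈ (G.filter fun z => z.1 = x), margX2 p x / (δ * (2:ℝ)^R₂) ≤ p z.1 z.2 := by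
        intro z hz
        have hzG := (Finset.mem_filter.mp hz).1
        have hzx : z.1 = x := (Finset.mem_filter.mp hz).2
        obtain ⟨hp', -, c2, -⟩ := hGfact z hzG
        rw [div_le_iff₀ hD, hzx]
        rw [hzx] at c2
        linarith
      have hsum_le : ∑ z ∈ (G.filter fun z => z.1 = x), p z.1 z.2 ≤ margX2 p x := by
        have hsub : (G.filter fun z => z.1 = x) ⊆ univ.filter (fun z : 𝒳 × 𝒴 => z.1 = x) := by
          intro z hz
          exact Finset.mem_filter.mpr ⟨Finset.mem_univ z, (Finset.mem_filter.mp hz).2⟩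
        refine le_trans (Finset.sum_le_sum_of_subset_of_nonneg hsub
          (fun z _ _ => hp0 z.1 z.2)) ?_
        have heq : (univ.filter (fun z : 𝒳 × 𝒴 => z.1 = x)) = {x} ×ˢ univ := by
          ext ⟨a, b⟩
          simp only [Finset.mem_filter, Finset.mem_univ, true_and, Finset.mem_product,
            Finset.mem_singleton, and_true]
        rw [heq, Finset.sum_product, Finset.sum_singleton, margX2]
      have hcs := Finset.card_nsmul_le_sum _ _ _ hterm
      rw [nsmul_eq_mul] at hcs
      have hfinal : ((G.filter fun z => z.1 = x).card : ℝ) * (margX2 p x / (δ * (2:ℝ)^R₂))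
          ≤ margX2 p x := le_trans hcs hsum_le
      have h2 := mul_le_mul_of_nonneg_right hfinal (le_of_lt hD)
      rw [mul_assoc, div_mul_cancel₀ _ (ne_of_gt hD)] at h2
      exact le_of_mul_le_mul_right (by linarith) hm
  have hAcard : ∀ y : 𝒴, ((G.filter fun z => z.2 = y).card : ℝ) ≤ δ * (2:ℝ)^R₁ := by
    intro y
    rcases (G.filter fun z => z.2 = y).eq_empty_or_nonempty with hS | ⟨w, hw⟩
    · rw [hS]
      simp
      positivity
    · have hwG : w ∈ G := (Finset.mem_filter.mp hw).1
      have hwy : w.2 = y := (Finset.mem_filter.mp hw).2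
      have hwp : 0 < p w.1 w.2 := (hGfact w hwG).1
      have hm : 0 < margY2 p y := by
        rw [margY2]
        refine lt_of_lt_of_le ?_ (Finset.single_le_sum (fun x _ => hp0 x y) (Finset.mem_univ w.1))
        rw [← hwy]; exact hwp
      have hD : 0 < δ * (2:ℝ)^R₁ := by positivity
      have hterm : ∀ z ∈ (G.filter fun z => z.2 = y), margY2 p y / (δ * (2:ℝ)^R₁) ≤ p z.1 z.2 := by
        intro z hz
        have hzG := (Finset.mem_filter.mp hz).1
        have hzy : z.2 = y := (Finset.mem_filter.mp hz).2
        obtain ⟨hp', c1, -, -⟩ := hGfact z hzG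
        rw [div_le_iff₀ hD, hzy]
        rw [hzy] at c1
        linarith
      have hsum_le : ∑ z ∈ (G.filter fun z => z.2 = y), p z.1 z.2 ≤ margY2 p y := by
        have hsub : (G.filter fun z => z.2 = y) ⊆ univ.filter (fun z : 𝒳 × 𝒴 => z.2 = y) := by
          intro z hz
          exact Finset.mem_filter.mpr ⟨Finset.mem_univ z, (Finset.mem_filter.mp hz).2⟩
        refine le_trans (Finset.sum_le_sum_of_subset_of_nonneg hsub
          (fun z _ _ => hp0 z.1 z.2)) ?_
        have heq : (univ.filter (fun z : 𝒳 × 𝒴 => z.2 = y)) = univ ×ˢ {y} := by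
          ext ⟨a, b⟩
          simp only [Finset.mem_filter, Finset.mem_univ, true_and, Finset.mem_product,
            Finset.mem_singleton, and_true]
        rw [heq, Finset.sum_product, margY2]
        apply le_of_eq
        apply Finset.sum_congr rfl
        intro x _
        rw [Finset.sum_singleton]
      have hcs := Finset.card_nsmul_le_sum _ _ _ hterm
      rw [nsmul_eq_mul] at hcs
      have hfinal : ((G.filter fun z => z.2 = y).card : ℝ) * (margY2 p y / (δ * (2:ℝ)^R₁))
          ≤ margY2 p y := le_trans hcs hsum_le
      have h2 := mul_le_mul_of_nonneg_right hfinal (le_of_lt hD)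
      rw [mul_assoc, div_mul_cancel₀ _ (ne_of_gt hD)] at h2
      exact le_of_mul_le_mul_right (by linarith) hm
  -- the decoder
  set gdec : (𝒳 → Fin cA) → (𝒴 → Fin cB) → Fin cA → Fin cB → 𝒳 × 𝒴 :=
    fun fA fB c₁ c₂ =>
      if h : ∃ z, z ∈ G ∧ fA z.1 = c₁ ∧ fB z.2 = c₂ then h.choose else z₀ with hgdec
  set err : (𝒳 → Fin cA) → (𝒴 → Fin cB) → ℝ :=
    fun fA fB => ∑ x, ∑ y, (if gdec fA fB (fA x) (fB y) ≠ (x, y) then p x y else 0)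
    with herr
  -- Step A : per-function error bound
  have stepA : ∀ fA fB, err fA fB ≤ ε + ∑ z ∈ G, p z.1 z.2 *
      (if ∃ z' ∈ G, z' ≠ z ∧ fA z'.1 = fA z.1 ∧ fB z'.2 = fB z.2 then (1:ℝ) else 0) := by
    intro fA fB
    simp only [herr]
    have e1 : (∑ z : 𝒳 × 𝒴, (if gdec fA fB (fA z.1) (fB z.2) ≠ z then p z.1 z.2 else 0))
        = ∑ x, ∑ y, (if gdec fA fB (fA x) (fB y) ≠ (x, y) then p x y else 0) :=
      Fintype.sum_prod_type _
    rw [← e1]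
    have split : (∑ z : 𝒳 × 𝒴, (if gdec fA fB (fA z.1) (fB z.2) ≠ z then p z.1 z.2 else 0))
        = (∑ z ∈ univ \ G, (if gdec fA fB (fA z.1) (fB z.2) ≠ z then p z.1 z.2 else 0))
          + ∑ z ∈ G, (if gdec fA fB (fA z.1) (fB z.2) ≠ z then p z.1 z.2 else 0) :=
      (Finset.sum_sdiff (Finset.subset_univ G)).symm
    rw [split]
    have bound1 : (∑ z ∈ univ \ G, (if gdec fA fB (fA z.1) (fB z.2) ≠ z then p z.1 z.2 else 0))
        ≤ ε := by
      have h1 : (∑ z ∈ univ \ G, (if gdec fA fB (fA z.1) (fB z.2) ≠ z then p z.1 z.2 else 0))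
          ≤ ∑ z ∈ univ \ G, p z.1 z.2 := by
        apply Finset.sum_le_sum
        intro z _
        split_ifs
        · exact le_refl _
        · exact hp0 z.1 z.2
      have h2 : (∑ z ∈ univ \ G, p z.1 z.2) = 1 - ∑ z ∈ G, p z.1 z.2 := by
        rw [Finset.sum_sdiff_eq_sub (Finset.subset_univ G), hsum1]
      linarith
    have bound2 : (∑ z ∈ G, (if gdec fA fB (fA z.1) (fB z.2) ≠ z then p z.1 z.2 else 0))
        ≤ ∑ z ∈ G, p z.1 z.2 *
          (if ∃ z' ∈ G, z' ≠ z ∧ fA z'.1 = fA z.1 ∧ fB z'.2 = fB z.2 then (1:ℝ) else 0) := by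
      apply Finset.sum_le_sum
      intro z hz
      by_cases hcoll : ∃ z' ∈ G, z' ≠ z ∧ fA z'.1 = fA z.1 ∧ fB z'.2 = fB z.2
      · rw [if_pos hcoll, mul_one]
        split_ifs
        · exact le_refl _
        · exact hp0 z.1 z.2
      · rw [if_neg hcoll, mul_zero]
        have hex : ∃ z', z' ∈ G ∧ fA z'.1 = fA z.1 ∧ fB z'.2 = fB z.2 := ⟨z, hz, rfl, rfl⟩
        have hdec : gdec fA fB (fA z.1) (fB z.2) = z := by
          simp only [hgdec]
          rw [dif_pos hex]
          obtain ⟨hwG, hw1, hw2⟩ := hex.choose_spec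
          by_contra hne
          exact hcoll ⟨hex.choose, hwG, hne, hw1, hw2⟩
        rw [if_neg (not_ne_iff.mpr hdec)]
    linarith
  -- Step B : expectation bound
  have stepB : ∑ fA : 𝒳 → Fin cA, ∑ fB : 𝒴 → Fin cB, err fA fB ≤
      (Fintype.card (𝒳 → Fin cA) : ℝ) * (Fintype.card (𝒴 → Fin cB) : ℝ) * (ε + 8 * δ) := by
    set KA : ℝ := (Fintype.card (𝒳 → Fin cA) : ℝ) with hKA
    set KB : ℝ := (Fintype.card (𝒴 → Fin cB) : ℝ) with hKB
    have hKA0 : 0 < KA := by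
      rw [hKA]
      have : 0 < Fintype.card (𝒳 → Fin cA) := Fintype.card_pos_iff.mpr
        ⟨fun _ => ⟨0, hcApos⟩⟩
      exact_mod_cast this
    have hKB0 : 0 < KB := by
      rw [hKB]
      have : 0 < Fintype.card (𝒴 → Fin cB) := Fintype.card_pos_iff.mpr
        ⟨fun _ => ⟨0, hcBpos⟩⟩
      exact_mod_cast this
    have hcA0 : (0:ℝ) < (cA:ℝ) := by exact_mod_cast hcApos
    have hcB0 : (0:ℝ) < (cB:ℝ) := by exact_mod_cast hcBpos
    -- sums of single collision indicators
    have hsumA : ∀ a b : 𝒳, a ≠ b →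
        (∑ fA : 𝒳 → Fin cA, (if fA a = fA b then (1:ℝ) else 0)) = KA / cA :=
      fun a b h => count_collision h
    have hsumAeq : ∀ a : 𝒳,
        (∑ fA : 𝒳 → Fin cA, (if fA a = fA a then (1:ℝ) else 0)) = KA := by
      intro a
      rw [Finset.sum_congr rfl (fun fA _ => if_pos rfl), Finset.sum_const,
        Finset.card_univ, nsmul_eq_mul, mul_one, hKA]
    have hsumB : ∀ a b : 𝒴, a ≠ b →
        (∑ fB : 𝒴 → Fin cB, (if fB a = fB b then (1:ℝ) else 0)) = KB / cB :=
      fun a b h => count_collision h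
    have hsumBeq : ∀ a : 𝒴,
        (∑ fB : 𝒴 → Fin cB, (if fB a = fB a then (1:ℝ) else 0)) = KB := by
      intro a
      rw [Finset.sum_congr rfl (fun fB _ => if_pos rfl), Finset.sum_const,
        Finset.card_univ, nsmul_eq_mul, mul_one, hKB]
    -- weight function
    have hW : ∀ z ∈ G, ∀ z' ∈ G.erase z,
        (∑ fA : 𝒳 → Fin cA, (if fA z'.1 = fA z.1 then (1:ℝ) else 0)) *
        (∑ fB : 𝒴 → Fin cB, (if fB z'.2 = fB z.2 then (1:ℝ) else 0)) ≤
        KA * KB * ((if z'.1 = z.1 then ((cB:ℝ))⁻¹ else 0) +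
          (if z'.2 = z.2 then ((cA:ℝ))⁻¹ else 0) + ((cA:ℝ))⁻¹ * ((cB:ℝ))⁻¹) := by
      intro z hz z' hz'
      have hne : z' ≠ z := (Finset.mem_erase.mp hz').1
      by_cases h1 : z'.1 = z.1
      · have h2 : z'.2 ≠ z.2 := by
          intro h2
          exact hne (Prod.ext h1 h2)
        rw [show (∑ fA : 𝒳 → Fin cA, (if fA z'.1 = fA z.1 then (1:ℝ) else 0)) = KA by
          rw [h1, hsumAeq], hsumB _ _ h2, if_pos h1]
        rw [div_eq_mul_inv]
        have hrest : 0 ≤ (if z'.2 = z.2 then ((cA:ℝ))⁻¹ else 0) + ((cA:ℝ))⁻¹ * ((cB:ℝ))⁻¹ := by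
          positivity
        nlinarith [mul_pos hKA0 hKB0]
      · rw [hsumA _ _ h1, if_neg h1]
        by_cases h2 : z'.2 = z.2
        · rw [show (∑ fB : 𝒴 → Fin cB, (if fB z'.2 = fB z.2 then (1:ℝ) else 0)) = KB by
            rw [h2, hsumBeq], if_pos h2]
          rw [div_eq_mul_inv]
          have : KA * ((cA:ℝ))⁻¹ * KB ≤ KA * KB * (0 + ((cA:ℝ))⁻¹ + ((cA:ℝ))⁻¹ * ((cB:ℝ))⁻¹) := by
            have h3 : 0 ≤ KA * KB * (((cA:ℝ))⁻¹ * ((cB:ℝ))⁻¹) := by positivity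
            nlinarith
          linarith [this]
        · rw [hsumB _ _ h2, if_neg h2]
          have h3 : KA / (cA:ℝ) * (KB / (cB:ℝ)) = KA * KB * (((cA:ℝ))⁻¹ * ((cB:ℝ))⁻¹) := by
            field_simp
          rw [h3]
          nlinarith [mul_pos hKA0 hKB0, mul_pos (inv_pos.mpr hcA0) (inv_pos.mpr hcB0)]
    -- union bound on the collision indicator
    have hand : ∀ (fA : 𝒳 → Fin cA) (fB : 𝒴 → Fin cB) (z : 𝒳 × 𝒴), z ∈ G →
        (if ∃ z' ∈ G, z' ≠ z ∧ fA z'.1 = fA z.1 ∧ fB z'.2 = fB z.2 then (1:ℝ) else 0)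
        ≤ ∑ z' ∈ G.erase z, (if fA z'.1 = fA z.1 then (1:ℝ) else 0) *
            (if fB z'.2 = fB z.2 then (1:ℝ) else 0) := by
      intro fA fB z hz
      by_cases h : ∃ z' ∈ G, z' ≠ z ∧ fA z'.1 = fA z.1 ∧ fB z'.2 = fB z.2
      · rw [if_pos h]
        obtain ⟨w, hwG, hwne, hw1, hw2⟩ := h
        have hmem : w ∈ G.erase z := Finset.mem_erase.mpr ⟨hwne, hwG⟩
        have hval : (1:ℝ) = (if fA w.1 = fA z.1 then (1:ℝ) else 0) *
            (if fB w.2 = fB z.2 then (1:ℝ) else 0) := by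
          rw [if_pos hw1, if_pos hw2, mul_one]
        refine le_trans (le_of_eq hval) ?_
        exact Finset.single_le_sum (f := fun z' => (if fA z'.1 = fA z.1 then (1:ℝ) else 0) *
          (if fB z'.2 = fB z.2 then (1:ℝ) else 0)) (fun i _ => by positivity) hmem
      · rw [if_neg h]
        exact Finset.sum_nonneg fun i _ => by positivity
    -- exchange of summation
    have exch : ∀ z : 𝒳 × 𝒴,
        (∑ fA : 𝒳 → Fin cA, ∑ fB : 𝒴 → Fin cB, ∑ z' ∈ G.erase z,
          (if fA z'.1 = fA z.1 then (1:ℝ) else 0) * (if fB z'.2 = fB z.2 then (1:ℝ) else 0))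
        = ∑ z' ∈ G.erase z,
            (∑ fA : 𝒳 → Fin cA, (if fA z'.1 = fA z.1 then (1:ℝ) else 0)) *
            (∑ fB : 𝒴 → Fin cB, (if fB z'.2 = fB z.2 then (1:ℝ) else 0)) := by
      intro z
      calc (∑ fA : 𝒳 → Fin cA, ∑ fB : 𝒴 → Fin cB, ∑ z' ∈ G.erase z,
            (if fA z'.1 = fA z.1 then (1:ℝ) else 0) * (if fB z'.2 = fB z.2 then (1:ℝ) else 0))
          = ∑ fA : 𝒳 → Fin cA, ∑ z' ∈ G.erase z, ∑ fB : 𝒴 → Fin cB,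
            (if fA z'.1 = fA z.1 then (1:ℝ) else 0) * (if fB z'.2 = fB z.2 then (1:ℝ) else 0) :=
            Finset.sum_congr rfl fun fA _ => Finset.sum_comm
        _ = ∑ z' ∈ G.erase z, ∑ fA : 𝒳 → Fin cA, ∑ fB : 𝒴 → Fin cB,
            (if fA z'.1 = fA z.1 then (1:ℝ) else 0) * (if fB z'.2 = fB z.2 then (1:ℝ) else 0) :=
            Finset.sum_comm
        _ = ∑ z' ∈ G.erase z,
            (∑ fA : 𝒳 → Fin cA, (if fA z'.1 = fA z.1 then (1:ℝ) else 0)) *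
            (∑ fB : 𝒴 → Fin cB, (if fB z'.2 = fB z.2 then (1:ℝ) else 0)) := by
            refine Finset.sum_congr rfl fun z' _ => ?_
            rw [Finset.sum_mul]
            refine Finset.sum_congr rfl fun fA _ => ?_
            rw [Finset.mul_sum]
    -- bound on the weights sum
    have hδR2 : δ * (2:ℝ)^R₂ * ((cB:ℝ))⁻¹ ≤ δ^4 := by
      have heq : δ^4 * ((2:ℝ)^R₂ * (1/δ)^3) = δ * (2:ℝ)^R₂ := by
        field_simp
      have h1 : δ * (2:ℝ)^R₂ ≤ δ^4 * (cB:ℝ) := by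
        rw [← heq]
        have := mul_le_mul_of_nonneg_left hcBlow (by positivity : (0:ℝ) ≤ δ^4)
        linarith
      calc δ * (2:ℝ)^R₂ * ((cB:ℝ))⁻¹ ≤ δ^4 * (cB:ℝ) * ((cB:ℝ))⁻¹ := by
            apply mul_le_mul_of_nonneg_right h1
            positivity
        _ = δ^4 := by
            rw [mul_assoc, mul_inv_cancel₀ (ne_of_gt hcB0), mul_one]
    have hδR1 : δ * (2:ℝ)^R₁ * ((cA:ℝ))⁻¹ ≤ δ^4 := by
      have heq : δ^4 * ((2:ℝ)^R₁ * (1/δ)^3) = δ * (2:ℝ)^R₁ := by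
        field_simp
      have h1 : δ * (2:ℝ)^R₁ ≤ δ^4 * (cA:ℝ) := by
        rw [← heq]
        have := mul_le_mul_of_nonneg_left hcAlow (by positivity : (0:ℝ) ≤ δ^4)
        linarith
      calc δ * (2:ℝ)^R₁ * ((cA:ℝ))⁻¹ ≤ δ^4 * (cA:ℝ) * ((cA:ℝ))⁻¹ := by
            apply mul_le_mul_of_nonneg_right h1
            positivity
        _ = δ^4 := by
            rw [mul_assoc, mul_inv_cancel₀ (ne_of_gt hcA0), mul_one]
    have hδE : δ^4 * (2:ℝ)^E * (((cA:ℝ))⁻¹ * ((cB:ℝ))⁻¹) ≤ δ := by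
      have hE2 : (2:ℝ)^E ≤ (2:ℝ)^R₁ * (2:ℝ)^R₂ := by
        rw [← Real.rpow_add (by norm_num : (0:ℝ) < 2)]
        apply Real.rpow_le_rpow_of_exponent_le (by norm_num)
        rw [hEdef]
        linarith
      have hprod : (2:ℝ)^R₁ * (1/δ)^3 * ((2:ℝ)^R₂ * (1/δ)^3) ≤ (cA:ℝ) * (cB:ℝ) := by
        apply mul_le_mul hcAlow hcBlow (by positivity) (by positivity)
      have hd9 : δ^4 * ((2:ℝ)^R₁ * (2:ℝ)^R₂) ≤
          δ * ((2:ℝ)^R₁ * (1/δ)^3 * ((2:ℝ)^R₂ * (1/δ)^3)) := by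
        have heq2 : δ * ((2:ℝ)^R₁ * (1/δ)^3 * ((2:ℝ)^R₂ * (1/δ)^3)) =
            ((2:ℝ)^R₁ * (2:ℝ)^R₂) * (1/δ^5) := by
          field_simp
        rw [heq2]
        have hδ9 : δ^4 ≤ 1/δ^5 := by
          rw [le_div_iff₀ (by positivity)]
          have : δ^4 * δ^5 = δ^9 := by ring
          rw [this]
          exact pow_le_one₀ (le_of_lt hδ0) (le_of_lt hδ1)
        have hP0 : (0:ℝ) < (2:ℝ)^R₁ * (2:ℝ)^R₂ := by positivity
        nlinarith
      have h1 : δ^4 * (2:ℝ)^E ≤ δ * ((cA:ℝ) * (cB:ℝ)) := by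
        calc δ^4 * (2:ℝ)^E ≤ δ^4 * ((2:ℝ)^R₁ * (2:ℝ)^R₂) := by
              apply mul_le_mul_of_nonneg_left hE2
              positivity
          _ ≤ δ * ((2:ℝ)^R₁ * (1/δ)^3 * ((2:ℝ)^R₂ * (1/δ)^3)) := hd9
          _ ≤ δ * ((cA:ℝ) * (cB:ℝ)) := by
              apply mul_le_mul_of_nonneg_left hprod (le_of_lt hδ0)
      calc δ^4 * (2:ℝ)^E * (((cA:ℝ))⁻¹ * ((cB:ℝ))⁻¹)
          ≤ δ * ((cA:ℝ) * (cB:ℝ)) * (((cA:ℝ))⁻¹ * ((cB:ℝ))⁻¹) := by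
            apply mul_le_mul_of_nonneg_right h1
            positivity
        _ = δ := by
            field_simp
    have hWsum : ∀ z ∈ G, (∑ z' ∈ G.erase z, ((if z'.1 = z.1 then ((cB:ℝ))⁻¹ else 0) +
        (if z'.2 = z.2 then ((cA:ℝ))⁻¹ else 0) + ((cA:ℝ))⁻¹ * ((cB:ℝ))⁻¹)) ≤ 3 * δ := by
      intro z hz
      rw [Finset.sum_add_distrib, Finset.sum_add_distrib]
      have e1 : (∑ z' ∈ G.erase z, (if z'.1 = z.1 then ((cB:ℝ))⁻¹ else 0))
          ≤ δ * (2:ℝ)^R₂ * ((cB:ℝ))⁻¹ := by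
        rw [← Finset.sum_filter, Finset.sum_const, nsmul_eq_mul]
        have hsub : ((G.erase z).filter fun z' => z'.1 = z.1) ⊆ G.filter fun z' => z'.1 = z.1 :=
          Finset.filter_subset_filter _ (Finset.erase_subset z G)
        have hc := Finset.card_le_card hsub
        have hc' : (((G.erase z).filter fun z' => z'.1 = z.1).card : ℝ) ≤ δ * (2:ℝ)^R₂ :=
          le_trans (by exact_mod_cast hc) (hBcard z.1)
        apply mul_le_mul_of_nonneg_right hc'
        positivity
      have e2 : (∑ z' ∈ G.erase z, (if z'.2 = z.2 then ((cA:ℝ))⁻¹ else 0))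
          ≤ δ * (2:ℝ)^R₁ * ((cA:ℝ))⁻¹ := by
        rw [← Finset.sum_filter, Finset.sum_const, nsmul_eq_mul]
        have hsub : ((G.erase z).filter fun z' => z'.2 = z.2) ⊆ G.filter fun z' => z'.2 = z.2 :=
          Finset.filter_subset_filter _ (Finset.erase_subset z G)
        have hc := Finset.card_le_card hsub
        have hc' : (((G.erase z).filter fun z' => z'.2 = z.2).card : ℝ) ≤ δ * (2:ℝ)^R₁ :=
          le_trans (by exact_mod_cast hc) (hAcard z.2)
        apply mul_le_mul_of_nonneg_right hc'
        positivity
      have e3 : (∑ _z' ∈ G.erase z, ((cA:ℝ))⁻¹ * ((cB:ℝ))⁻¹)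
          ≤ δ^4 * (2:ℝ)^E * (((cA:ℝ))⁻¹ * ((cB:ℝ))⁻¹) := by
        rw [Finset.sum_const, nsmul_eq_mul]
        have hc : ((G.erase z).card : ℝ) ≤ δ^4 * (2:ℝ)^E := by
          have := Finset.card_le_card (Finset.erase_subset z G)
          exact le_trans (by exact_mod_cast this) hNcard
        apply mul_le_mul_of_nonneg_right hc
        positivity
      have hd4 : δ^4 ≤ δ := by
        calc δ^4 = δ * δ^3 := by ring
          _ ≤ δ * 1 := by
              apply mul_le_mul_of_nonneg_left _ (le_of_lt hδ0)
              exact pow_le_one₀ (le_of_lt hδ0) (le_of_lt hδ1)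
          _ = δ := mul_one δ
      linarith [le_trans e1 hδR2, le_trans e2 hδR1, le_trans e3 hδE]
    -- per-z collision probability bound
    have hcoll : ∀ z ∈ G,
        (∑ fA : 𝒳 → Fin cA, ∑ fB : 𝒴 → Fin cB, ∑ z' ∈ G.erase z,
          (if fA z'.1 = fA z.1 then (1:ℝ) else 0) * (if fB z'.2 = fB z.2 then (1:ℝ) else 0))
        ≤ KA * KB * (3 * δ) := by
      intro z hz
      rw [exch z]
      calc (∑ z' ∈ G.erase z,
            (∑ fA : 𝒳 → Fin cA, (if fA z'.1 = fA z.1 then (1:ℝ) else 0)) *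
            (∑ fB : 𝒴 → Fin cB, (if fB z'.2 = fB z.2 then (1:ℝ) else 0)))
          ≤ ∑ z' ∈ G.erase z, KA * KB * ((if z'.1 = z.1 then ((cB:ℝ))⁻¹ else 0) +
              (if z'.2 = z.2 then ((cA:ℝ))⁻¹ else 0) + ((cA:ℝ))⁻¹ * ((cB:ℝ))⁻¹) :=
            Finset.sum_le_sum (fun z' hz' => hW z hz z' hz')
        _ = KA * KB * (∑ z' ∈ G.erase z, ((if z'.1 = z.1 then ((cB:ℝ))⁻¹ else 0) +
              (if z'.2 = z.2 then ((cA:ℝ))⁻¹ else 0) + ((cA:ℝ))⁻¹ * ((cB:ℝ))⁻¹)) :=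
            (Finset.mul_sum _ _ _).symm
        _ ≤ KA * KB * (3 * δ) := by
            apply mul_le_mul_of_nonneg_left (hWsum z hz)
            positivity
    -- assemble
    have main1 : ∑ fA : 𝒳 → Fin cA, ∑ fB : 𝒴 → Fin cB, err fA fB ≤
        ∑ fA : 𝒳 → Fin cA, ∑ fB : 𝒴 → Fin cB, (ε + ∑ z ∈ G, p z.1 z.2 *
          (∑ z' ∈ G.erase z, (if fA z'.1 = fA z.1 then (1:ℝ) else 0) *
            (if fB z'.2 = fB z.2 then (1:ℝ) else 0))) := by
      apply Finset.sum_le_sum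
      intro fA _
      apply Finset.sum_le_sum
      intro fB _
      refine le_trans (stepA fA fB) ?_
      apply add_le_add_right
      apply Finset.sum_le_sum
      intro z hz
      exact mul_le_mul_of_nonneg_left (hand fA fB z hz) (hp0 z.1 z.2)
    have main2 : (∑ fA : 𝒳 → Fin cA, ∑ fB : 𝒴 → Fin cB, (ε + ∑ z ∈ G, p z.1 z.2 *
          (∑ z' ∈ G.erase z, (if fA z'.1 = fA z.1 then (1:ℝ) else 0) *
            (if fB z'.2 = fB z.2 then (1:ℝ) else 0))))
        = KA * KB * ε + ∑ z ∈ G, p z.1 z.2 *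
          (∑ fA : 𝒳 → Fin cA, ∑ fB : 𝒴 → Fin cB, ∑ z' ∈ G.erase z,
            (if fA z'.1 = fA z.1 then (1:ℝ) else 0) * (if fB z'.2 = fB z.2 then (1:ℝ) else 0)) := by
      have t1 : ∀ fA : 𝒳 → Fin cA,
          (∑ fB : 𝒴 → Fin cB, (ε + ∑ z ∈ G, p z.1 z.2 *
            (∑ z' ∈ G.erase z, (if fA z'.1 = fA z.1 then (1:ℝ) else 0) *
              (if fB z'.2 = fB z.2 then (1:ℝ) else 0))))
          = KB * ε + ∑ fB : 𝒴 → Fin cB, ∑ z ∈ G, p z.1 z.2 *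
            (∑ z' ∈ G.erase z, (if fA z'.1 = fA z.1 then (1:ℝ) else 0) *
              (if fB z'.2 = fB z.2 then (1:ℝ) else 0)) := by
        intro fA
        rw [Finset.sum_add_distrib, Finset.sum_const, Finset.card_univ, nsmul_eq_mul, hKB]
      rw [Finset.sum_congr rfl fun fA _ => t1 fA, Finset.sum_add_distrib, Finset.sum_const,
        Finset.card_univ, nsmul_eq_mul]
      congr 1
      · rw [hKA]; ring
      · calc (∑ fA : 𝒳 → Fin cA, ∑ fB : 𝒴 → Fin cB, ∑ z ∈ G, p z.1 z.2 *
              (∑ z' ∈ G.erase z, (if fA z'.1 = fA z.1 then (1:ℝ) else 0) *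
                (if fB z'.2 = fB z.2 then (1:ℝ) else 0)))
            = ∑ fA : 𝒳 → Fin cA, ∑ z ∈ G, ∑ fB : 𝒴 → Fin cB, p z.1 z.2 *
              (∑ z' ∈ G.erase z, (if fA z'.1 = fA z.1 then (1:ℝ) else 0) *
                (if fB z'.2 = fB z.2 then (1:ℝ) else 0)) :=
              Finset.sum_congr rfl fun fA _ => Finset.sum_comm
          _ = ∑ z ∈ G, ∑ fA : 𝒳 → Fin cA, ∑ fB : 𝒴 → Fin cB, p z.1 z.2 *
              (∑ z' ∈ G.erase z, (if fA z'.1 = fA z.1 then (1:ℝ) else 0) *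
                (if fB z'.2 = fB z.2 then (1:ℝ) else 0)) := Finset.sum_comm
          _ = ∑ z ∈ G, p z.1 z.2 *
              (∑ fA : 𝒳 → Fin cA, ∑ fB : 𝒴 → Fin cB, ∑ z' ∈ G.erase z,
                (if fA z'.1 = fA z.1 then (1:ℝ) else 0) *
                (if fB z'.2 = fB z.2 then (1:ℝ) else 0)) := by
              refine Finset.sum_congr rfl fun z _ => ?_
              rw [Finset.mul_sum]
              refine Finset.sum_congr rfl fun fA _ => ?_
              rw [Finset.mul_sum]
    rw [main2] at main1
    have main3 : (∑ z ∈ G, p z.1 z.2 *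
          (∑ fA : 𝒳 → Fin cA, ∑ fB : 𝒴 → Fin cB, ∑ z' ∈ G.erase z,
            (if fA z'.1 = fA z.1 then (1:ℝ) else 0) * (if fB z'.2 = fB z.2 then (1:ℝ) else 0)))
        ≤ KA * KB * (3 * δ) := by
      calc (∑ z ∈ G, p z.1 z.2 *
            (∑ fA : 𝒳 → Fin cA, ∑ fB : 𝒴 → Fin cB, ∑ z' ∈ G.erase z,
              (if fA z'.1 = fA z.1 then (1:ℝ) else 0) * (if fB z'.2 = fB z.2 then (1:ℝ) else 0)))
          ≤ ∑ z ∈ G, p z.1 z.2 * (KA * KB * (3 * δ)) := by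
            apply Finset.sum_le_sum
            intro z hz
            exact mul_le_mul_of_nonneg_left (hcoll z hz) (hp0 z.1 z.2)
        _ = (∑ z ∈ G, p z.1 z.2) * (KA * KB * (3 * δ)) := (Finset.sum_mul _ _ _).symm
        _ ≤ 1 * (KA * KB * (3 * δ)) := by
            apply mul_le_mul_of_nonneg_right hGle1
            positivity
        _ = KA * KB * (3 * δ) := one_mul _
    have hfinal : KA * KB * ε + KA * KB * (3 * δ) ≤ KA * KB * (ε + 8 * δ) := by
      have hKK : 0 < KA * KB := mul_pos hKA0 hKB0
      nlinarith
    linarith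
  -- Step C : choose a good pair of functions
  have stepC : ∃ fA : 𝒳 → Fin cA, ∃ fB : 𝒴 → Fin cB, err fA fB ≤ ε + 8 * δ := by
    haveI : NeZero cA := ⟨Nat.pos_iff_ne_zero.mp hcApos⟩
    haveI : NeZero cB := ⟨Nat.pos_iff_ne_zero.mp hcBpos⟩
    by_contra hcon
    push_neg at hcon
    have hlt : ∀ φ : (𝒳 → Fin cA) × (𝒴 → Fin cB), ε + 8 * δ < err φ.1 φ.2 :=
      fun φ => hcon φ.1 φ.2
    have hsum : (Fintype.card ((𝒳 → Fin cA) × (𝒴 → Fin cB)) : ℝ) * (ε + 8 * δ)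
        < ∑ φ : (𝒳 → Fin cA) × (𝒴 → Fin cB), err φ.1 φ.2 := by
      have hne : (Finset.univ : Finset ((𝒳 → Fin cA) × (𝒴 → Fin cB))).Nonempty :=
        Finset.univ_nonempty
      calc (Fintype.card ((𝒳 → Fin cA) × (𝒴 → Fin cB)) : ℝ) * (ε + 8 * δ)
          = ∑ _φ : (𝒳 → Fin cA) × (𝒴 → Fin cB), (ε + 8 * δ) := by
            rw [Finset.sum_const, Finset.card_univ, nsmul_eq_mul]
        _ < ∑ φ : (𝒳 → Fin cA) × (𝒴 → Fin cB), err φ.1 φ.2 :=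
            Finset.sum_lt_sum_of_nonempty hne fun φ _ => hlt φ
    have heq : (∑ φ : (𝒳 → Fin cA) × (𝒴 → Fin cB), err φ.1 φ.2)
        = ∑ fA : 𝒳 → Fin cA, ∑ fB : 𝒴 → Fin cB, err fA fB := Fintype.sum_prod_type _
    rw [heq] at hsum
    have hcards : (Fintype.card ((𝒳 → Fin cA) × (𝒴 → Fin cB)) : ℝ)
        = (Fintype.card (𝒳 → Fin cA) : ℝ) * (Fintype.card (𝒴 → Fin cB) : ℝ) := by
      rw [Fintype.card_prod]
      push_cast
      ring
    rw [hcards] at hsum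
    linarith
  obtain ⟨fA, fB, hf⟩ := stepC
  exact ⟨cA, cB, fA, fB, gdec fA fB, le_of_eq hcAbound, le_of_eq hcBbound, hf⟩

end
end
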